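/- arXiv:1201.5761 — 5 statements merged into one kernel-verified Lean document; each statement's English description precedes it below -/
import Mathlib

section
/- Let E and F be nonzero finite-dimensional complex inner product spaces, a : E → F and b : F → F continuous linear maps with b invertible, a† the adjoint of a, κ = ‖a‖²‖b⁻¹‖². Assume N := a† b⁻¹ a is self-adjoint and there is μ > 0 with re⟨v, N v⟩ ≤ −μ‖v‖² for all v ∈ E. Set α = min(‖b⁻¹‖⁻¹/2, μ/(4κ)). Then for every z ∈ ℂ with re z ≥ 0 and |z| ≤ α: the maps b − z·id, z·id − a†(b − z·id)⁻¹a, and z·id − N are all invertible; the resolvent difference S(z) = (z·id − a†(b − z·id)⁻¹a)⁻¹ − (z·id − N)⁻¹ satisfies ‖S(z)‖ ≤ 4κμ⁻²|z|; and if in addition z ≠ 0 then also ‖S(z)‖ ≤ 4κ|z|⁻¹. -/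
noncomputable section

open ContinuousLinearMap

lemma aux_sq1 (zr zi cr r mu : ℝ) (hzr : 0 ≤ zr) (hr : 0 ≤ r) (hmu : 0 < mu)
    (hc : cr ≤ -mu * r) : (mu * r)^2 ≤ (zr*r - cr)^2 + (zi*r)^2 := by
  nlinarith [sq_nonneg (zi*r), mul_nonneg hzr hr,
    mul_nonneg (mul_nonneg hzr hr) (show 0 ≤ -cr by nlinarith [mul_nonneg hmu.le hr]),
    mul_nonneg (show 0 ≤ -cr - mu*r by nlinarith)
      (show 0 ≤ -cr + mu*r by nlinarith [mul_nonneg hmu.le hr]),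
    mul_nonneg (mul_nonneg hzr hr) (mul_nonneg hmu.le hr)]

lemma aux_sq2 (zr zi cr r mu : ℝ) (hzr : 0 ≤ zr) (hr : 0 ≤ r) (hmu : 0 < mu)
    (hc : cr ≤ -mu * r) : (zr^2 + zi^2) * r^2 ≤ (zr*r - cr)^2 + (zi*r)^2 := by
  nlinarith [sq_nonneg cr, mul_nonneg (mul_nonneg hzr hr)
    (show 0 ≤ -cr by nlinarith [mul_nonneg hmu.le hr])]

/-- A coercive operator on a finite-dimensional space is invertible, with inverse norm bound. -/
lemma aux_isUnit_of_lb {G : Type*} [NormedAddCommGroup G] [NormedSpace ℂ G]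
    [FiniteDimensional ℂ G] (T : G →L[ℂ] G) (c : ℝ) (hc : 0 < c)
    (h : ∀ v, c * ‖v‖ ≤ ‖T v‖) : IsUnit T ∧ ‖Ring.inverse T‖ ≤ c⁻¹ := by
  have hinj : Function.Injective T := by
    rw [injective_iff_map_eq_zero]
    intro v hv
    by_contra hv0
    have : 0 < ‖v‖ := norm_pos_iff.mpr hv0
    have := h v
    rw [hv, norm_zero] at this
    nlinarith
  have hsurj : Function.Surjective T := LinearMap.injective_iff_surjective.mp hinj
  let e : G ≃L[ℂ] G :=
    (LinearEquiv.ofBijective (T : G →ₗ[ℂ] G) ⟨hinj, hsurj⟩).toContinuousLinearEquiv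
  have he : ∀ x, e x = T x := fun x => rfl
  let u : (G →L[ℂ] G)ˣ :=
    { val := T, inv := e.symm.toContinuousLinearMap
      val_inv := by
        ext x; exact e.apply_symm_apply x
      inv_val := by
        ext x; exact e.symm_apply_apply x }
  have hu : IsUnit T := ⟨u, rfl⟩
  refine ⟨hu, ?_⟩
  have hinv : T * Ring.inverse T = 1 := Ring.mul_inverse_cancel T hu
  refine opNorm_le_bound _ (by positivity) fun w => ?_
  have h1 := h (Ring.inverse T w)
  have h2 : T (Ring.inverse T w) = w := by
    have := congrArg (fun S => S w) hinv
    simpa [mul_apply] using this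
  rw [h2] at h1
  calc ‖Ring.inverse T w‖ ≤ ‖w‖ / c := by rw [le_div_iff₀ hc]; linarith
    _ = c⁻¹ * ‖w‖ := by ring

variable {E F : Type*} [NormedAddCommGroup E] [InnerProductSpace ℂ E]
  [FiniteDimensional ℂ E] [NormedAddCommGroup F] [InnerProductSpace ℂ F]
  [FiniteDimensional ℂ F]

/-- The resolvent difference `S(z)`: the population block
`(z·id − a†(b − z·id)⁻¹a)⁻¹` of the quantum-network resolvent minus the kinetic-network
resolvent `(z·id − a†b⁻¹a)⁻¹`. -/
def resolventDiff (a : E →L[ℂ] F) (b : F →L[ℂ] F) (z : ℂ) : E →L[ℂ] E :=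
  Ring.inverse (z • (1 : E →L[ℂ] E) -
      (ContinuousLinearMap.adjoint a).comp
        ((Ring.inverse (b - z • (1 : F →L[ℂ] F))).comp a)) -
  Ring.inverse (z • (1 : E →L[ℂ] E) -
      (ContinuousLinearMap.adjoint a).comp ((Ring.inverse b).comp a))

set_option maxHeartbeats 1000000 in
/-- **Resolvent difference bounds in the right half plane, small `|z|`.** -/
theorem resolventDiff_bound_small_z
    [Nontrivial E] [Nontrivial F]
    (a : E →L[ℂ] F) (b : F →L[ℂ] F) (hb : IsUnit b)
    (N : E →L[ℂ] E)
    (hN : N = (ContinuousLinearMap.adjoint a).comp ((Ring.inverse b).comp a))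
    (hNsa : IsSelfAdjoint N)
    (μ : ℝ) (hμ : 0 < μ)
    (hNneg : ∀ v : E, (inner ℂ v (N v) : ℂ).re ≤ -μ * ‖v‖ ^ 2)
    (κ α : ℝ) (hκ : κ = ‖a‖ ^ 2 * ‖Ring.inverse b‖ ^ 2)
    (hα : α = min (‖Ring.inverse b‖⁻¹ / 2) (μ / (4 * κ)))
    (z : ℂ) (hz : 0 ≤ z.re) (hzα : ‖z‖ ≤ α) :
    IsUnit (b - z • (1 : F →L[ℂ] F)) ∧
    IsUnit (z • (1 : E →L[ℂ] E) -
      (ContinuousLinearMap.adjoint a).comp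
        ((Ring.inverse (b - z • (1 : F →L[ℂ] F))).comp a)) ∧
    IsUnit (z • (1 : E →L[ℂ] E) - N) ∧
    ‖resolventDiff a b z‖ ≤ 4 * κ * (μ ^ 2)⁻¹ * ‖z‖ ∧
    (z ≠ 0 → ‖resolventDiff a b z‖ ≤ 4 * κ * ‖z‖⁻¹) := by
  classical
  set ib := Ring.inverse b with hib_def
  set B := b - z • (1 : F →L[ℂ] F) with hB_def
  set M := (adjoint a).comp ((Ring.inverse B).comp a) with hM_def
  set T := z • (1 : E →L[ℂ] E) - M with hT_def
  set V := z • (1 : E →L[ℂ] E) - N with hV_def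
  set m := max μ ‖z‖ with hm_def
  have hm : 0 < m := lt_of_lt_of_le hμ (le_max_left _ _)
  -- nonzero facts
  have hibmul : ib * b = 1 := Ring.inverse_mul_cancel b hb
  have hbib : b * ib = 1 := Ring.mul_inverse_cancel b hb
  have hib_ne : ib ≠ 0 := by
    intro h0
    obtain ⟨x, hx⟩ := exists_ne (0 : F)
    have h1 : (1 : F →L[ℂ] F) x = (0 : F →L[ℂ] F) x := by
      rw [← hibmul, h0, zero_mul]
    simp at h1
    exact hx h1
  have hib_pos : 0 < ‖ib‖ := norm_pos_iff.mpr hib_ne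
  have ha_ne : a ≠ 0 := by
    intro h0
    obtain ⟨v, hv⟩ := exists_ne (0 : E)
    have hN0 : N = 0 := by rw [hN, h0]; ext x; simp
    have := hNneg v
    rw [hN0] at this
    simp at this
    have hv2 : 0 < ‖v‖ ^ 2 := pow_pos (norm_pos_iff.mpr hv) 2
    nlinarith
  have ha_pos : 0 < ‖a‖ := norm_pos_iff.mpr ha_ne
  have hκ_pos : 0 < κ := by
    rw [hκ]; exact mul_pos (pow_pos ha_pos 2) (pow_pos hib_pos 2)
  -- bounds on z
  have hz1 : ‖z‖ ≤ ‖ib‖⁻¹ / 2 := le_trans hzα (hα ▸ min_le_left _ _)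
  have hz2 : ‖z‖ ≤ μ / (4 * κ) := le_trans hzα (hα ▸ min_le_right _ _)
  have hz4 : 4 * κ * ‖z‖ ≤ μ := by
    rw [le_div_iff₀ (mul_pos (by norm_num) hκ_pos)] at hz2; linarith
  -- Step 1 : B is invertible with inverse bound 2‖ib‖
  have hblb : ∀ w : F, ‖ib‖⁻¹ * ‖w‖ ≤ ‖b w‖ := by
    intro w
    have h1 : ib (b w) = w := by
      have := congrArg (fun S => S w) hibmul
      simpa [mul_apply] using this
    have h2 : ‖ib (b w)‖ ≤ ‖ib‖ * ‖b w‖ := le_opNorm ib (b w)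
    rw [h1] at h2
    rw [inv_mul_le_iff₀ hib_pos]
    exact h2
  have hBlb : ∀ w : F, (‖ib‖⁻¹ / 2) * ‖w‖ ≤ ‖B w‖ := by
    intro w
    have h1 : B w = b w - z • w := by rw [hB_def]; simp [sub_apply, smul_apply]
    have h2 : ‖b w‖ - ‖z • w‖ ≤ ‖b w - z • w‖ := norm_sub_norm_le _ _
    have h3 : ‖z • w‖ = ‖z‖ * ‖w‖ := norm_smul z w
    have h4 := hblb w
    have h5 : ‖z‖ * ‖w‖ ≤ (‖ib‖⁻¹ / 2) * ‖w‖ :=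
      mul_le_mul_of_nonneg_right hz1 (norm_nonneg w)
    rw [h1]
    linarith
  obtain ⟨hBunit, hBinv⟩ := aux_isUnit_of_lb B (‖ib‖⁻¹ / 2) (by positivity) hBlb
  have hBinv' : ‖Ring.inverse B‖ ≤ 2 * ‖ib‖ := by
    rw [show (‖ib‖⁻¹ / 2)⁻¹ = 2 * ‖ib‖ by field_simp] at hBinv
    exact hBinv
  -- Step 2/3 : lower bound for V = z•1 - N
  have hadj : ContinuousLinearMap.adjoint N = N := by
    rw [← ContinuousLinearMap.star_eq_adjoint]; exact hNsa
  have hVlb : ∀ v : E, m * ‖v‖ ≤ ‖V v‖ := by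
    intro v
    rcases eq_or_ne v 0 with rfl | hv
    · simp
    have hvpos : 0 < ‖v‖ := norm_pos_iff.mpr hv
    set c : ℂ := inner ℂ v (N v) with hc
    have hconj : (starRingEnd ℂ) c = c := by
      rw [hc, inner_conj_symm]
      nth_rewrite 1 [← hadj]
      exact ContinuousLinearMap.adjoint_inner_left N v v
    have hcim : c.im = 0 := Complex.conj_eq_iff_im.mp hconj
    have hcre : c.re ≤ -μ * ‖v‖ ^ 2 := hNneg v
    set r : ℝ := ‖v‖ ^ 2 with hr
    have hrpos : 0 < r := by positivity
    have hVv : V v = z • v - N v := by rw [hV_def]; simp [sub_apply, smul_apply]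
    have hw : (inner ℂ v (V v) : ℂ) = z * (r : ℂ) - c := by
      rw [hVv, inner_sub_right, inner_smul_right, inner_self_eq_norm_sq_to_K, hc, hr]
      norm_cast
    have hwre : (z * (r : ℂ) - c).re = z.re * r - c.re := by
      simp [Complex.sub_re, Complex.mul_re]
    have hwim : (z * (r : ℂ) - c).im = z.im * r := by
      simp [Complex.sub_im, Complex.mul_im, hcim]
    have hnormsq : ‖z * (r : ℂ) - c‖ ^ 2 = (z.re * r - c.re) ^ 2 + (z.im * r) ^ 2 := by
      rw [Complex.sq_norm, Complex.normSq_apply, hwre, hwim]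
      ring
    have hzabs : ‖z‖ ^ 2 = z.re ^ 2 + z.im ^ 2 := by
      rw [Complex.sq_norm, Complex.normSq_apply]; ring
    have key : m * r ≤ ‖z * (r : ℂ) - c‖ := by
      have hsq : (m * r) ^ 2 ≤ ‖z * (r : ℂ) - c‖ ^ 2 := by
        rw [hnormsq]
        rcases max_choice μ ‖z‖ with hmax | hmax <;> rw [hm_def, hmax]
        · exact aux_sq1 z.re z.im c.re r μ hz hrpos.le hμ hcre
        · have h2 : (‖z‖ * r) ^ 2 = (z.re ^ 2 + z.im ^ 2) * r ^ 2 := by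
            rw [mul_pow, hzabs]
          rw [h2]
          exact aux_sq2 z.re z.im c.re r μ hz hrpos.le hμ hcre
      have hnn : 0 ≤ ‖z * (r : ℂ) - c‖ := norm_nonneg _
      have hmr : 0 ≤ m * r := by positivity
      nlinarith
    have hCS : ‖(inner ℂ v (V v) : ℂ)‖ ≤ ‖v‖ * ‖V v‖ := norm_inner_le_norm v (V v)
    rw [hw] at hCS
    have hfin : m * r ≤ ‖v‖ * ‖V v‖ := le_trans key hCS
    rw [hr] at hfin
    nlinarith
  obtain ⟨hVunit, hVinv⟩ := aux_isUnit_of_lb V m hm hVlb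
  -- Step 4 : resolvent identity for D = Ring.inverse B - ib
  have hiB : Ring.inverse B * B = 1 := Ring.inverse_mul_cancel B hBunit
  have hbB : b - B = z • (1 : F →L[ℂ] F) := sub_sub_cancel b (z • 1)
  have hD : Ring.inverse B - ib = z • (Ring.inverse B * ib) := by
    calc Ring.inverse B - ib
        = Ring.inverse B * (b * ib) - (Ring.inverse B * B) * ib := by
          rw [hbib, hiB, mul_one, one_mul]
      _ = Ring.inverse B * ((b - B) * ib) := by noncomm_ring
      _ = Ring.inverse B * ((z • (1 : F →L[ℂ] F)) * ib) := by rw [hbB]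
      _ = z • (Ring.inverse B * ib) := by
          rw [smul_mul_assoc, one_mul, mul_smul_comm]
  have hDnorm : ‖Ring.inverse B - ib‖ ≤ ‖z‖ * (2 * ‖ib‖ * ‖ib‖) := by
    rw [hD]
    calc ‖z • (Ring.inverse B * ib)‖ ≤ ‖z‖ * ‖Ring.inverse B * ib‖ := opNorm_smul_le _ _
      _ ≤ ‖z‖ * (2 * ‖ib‖ * ‖ib‖) := by
          gcongr
          calc ‖Ring.inverse B * ib‖ ≤ ‖Ring.inverse B‖ * ‖ib‖ := norm_mul_le _ _
            _ ≤ 2 * ‖ib‖ * ‖ib‖ := by gcongr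
  -- Step 5 : M - N and its norm
  have hMN_eq : M - N = (adjoint a).comp ((Ring.inverse B - ib).comp a) := by
    rw [hN, hM_def, ContinuousLinearMap.sub_comp, ContinuousLinearMap.comp_sub]
  have hadj_norm : ‖(adjoint a : F →L[ℂ] E)‖ = ‖a‖ := adjoint.norm_map a
  have hMNnorm : ‖M - N‖ ≤ 2 * κ * ‖z‖ := by
    rw [hMN_eq]
    calc ‖(adjoint a).comp ((Ring.inverse B - ib).comp a)‖
        ≤ ‖(adjoint a : F →L[ℂ] E)‖ * ‖(Ring.inverse B - ib).comp a‖ := opNorm_comp_le _ _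
      _ ≤ ‖(adjoint a : F →L[ℂ] E)‖ * (‖Ring.inverse B - ib‖ * ‖a‖) := by
          gcongr; exact opNorm_comp_le _ _
      _ ≤ ‖a‖ * ((‖z‖ * (2 * ‖ib‖ * ‖ib‖)) * ‖a‖) := by
          rw [hadj_norm]; gcongr
      _ = 2 * κ * ‖z‖ := by rw [hκ]; ring
  -- Step 6 : lower bound for T
  have h2κ : 2 * κ * ‖z‖ ≤ μ / 2 := by linarith
  have hTlb : ∀ v : E, (m / 2) * ‖v‖ ≤ ‖T v‖ := by
    intro v
    have hVT : V v = T v + (M - N) v := by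
      have h1 : V = T + (M - N) := by rw [hT_def, hV_def]; abel
      rw [h1]; simp [add_apply]
    have h2 : ‖V v‖ ≤ ‖T v‖ + ‖(M - N) v‖ := by rw [hVT]; exact norm_add_le _ _
    have h3 : ‖(M - N) v‖ ≤ ‖M - N‖ * ‖v‖ := le_opNorm _ _
    have h4 : ‖M - N‖ * ‖v‖ ≤ (μ / 2) * ‖v‖ :=
      mul_le_mul_of_nonneg_right (le_trans hMNnorm h2κ) (norm_nonneg v)
    have h5 := hVlb v
    have h6 : μ ≤ m := le_max_left _ _
    have h7 : (μ / 2) * ‖v‖ ≤ (m / 2) * ‖v‖ := by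
      apply mul_le_mul_of_nonneg_right _ (norm_nonneg v); linarith
    linarith
  obtain ⟨hTunit, hTinv⟩ := aux_isUnit_of_lb T (m / 2) (by positivity) hTlb
  have hTinv' : ‖Ring.inverse T‖ ≤ 2 / m := by
    rw [show (m / 2 : ℝ)⁻¹ = 2 / m by field_simp] at hTinv
    exact hTinv
  -- Step 7 : the resolvent difference identity and bounds
  have hiT : Ring.inverse T * T = 1 := Ring.inverse_mul_cancel T hTunit
  have hViV : V * Ring.inverse V = 1 := Ring.mul_inverse_cancel V hVunit
  have hVmT : V - T = M - N := by rw [hT_def, hV_def]; abel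
  have hid : Ring.inverse T - Ring.inverse V
      = Ring.inverse T * ((M - N) * Ring.inverse V) := by
    calc Ring.inverse T - Ring.inverse V
        = Ring.inverse T * (V * Ring.inverse V)
            - (Ring.inverse T * T) * Ring.inverse V := by
          rw [hViV, hiT, mul_one, one_mul]
      _ = Ring.inverse T * ((V - T) * Ring.inverse V) := by noncomm_ring
      _ = Ring.inverse T * ((M - N) * Ring.inverse V) := by rw [hVmT]
  have hSdef : resolventDiff a b z = Ring.inverse T - Ring.inverse V := by
    rw [hT_def, hV_def, hM_def, hB_def, hN, hib_def]
    rfl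
  have hSnorm : ‖resolventDiff a b z‖ ≤ (2 / m) * (2 * κ * ‖z‖ * m⁻¹) := by
    rw [hSdef, hid]
    calc ‖Ring.inverse T * ((M - N) * Ring.inverse V)‖
        ≤ ‖Ring.inverse T‖ * ‖(M - N) * Ring.inverse V‖ := norm_mul_le _ _
      _ ≤ ‖Ring.inverse T‖ * (‖M - N‖ * ‖Ring.inverse V‖) := by
          gcongr; exact norm_mul_le _ _
      _ ≤ (2 / m) * (2 * κ * ‖z‖ * m⁻¹) := by
          gcongr <;> positivity
  have hfin : ‖resolventDiff a b z‖ ≤ 4 * κ * ‖z‖ / m ^ 2 := by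
    refine le_trans hSnorm (le_of_eq ?_)
    field_simp
    ring
  refine ⟨hBunit, hTunit, hVunit, ?_, ?_⟩
  · have hμm : μ ^ 2 ≤ m ^ 2 := pow_le_pow_left₀ hμ.le (le_max_left μ ‖z‖) 2
    calc ‖resolventDiff a b z‖ ≤ 4 * κ * ‖z‖ / m ^ 2 := hfin
      _ ≤ 4 * κ * ‖z‖ / μ ^ 2 :=
          div_le_div_of_nonneg_left (by positivity) (by positivity) hμm
      _ = 4 * κ * (μ ^ 2)⁻¹ * ‖z‖ := by ring
  · intro hz0
    have hz0' : 0 < ‖z‖ := norm_pos_iff.mpr hz0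
    have hzm : ‖z‖ ^ 2 ≤ m ^ 2 := pow_le_pow_left₀ (norm_nonneg z) (le_max_right μ ‖z‖) 2
    calc ‖resolventDiff a b z‖ ≤ 4 * κ * ‖z‖ / m ^ 2 := hfin
      _ ≤ 4 * κ * ‖z‖ / ‖z‖ ^ 2 :=
          div_le_div_of_nonneg_left (by positivity) (by positivity) hzm
      _ = 4 * κ * ‖z‖⁻¹ := by
          rw [pow_two, mul_div_mul_right _ _ hz0'.ne', div_eq_mul_inv]
end
end

section
/- Let E and F be nonzero finite-dimensional complex inner product spaces, a : E → F and b : F → F continuous linear maps with b invertible, a† the adjoint of a, κ = ‖a‖²‖b⁻¹‖². Assume N := a† b⁻¹ a is self-adjoint and there is μ > 0 with re⟨v, N v⟩ ≤ −μ‖v‖² for all v ∈ E. Set α = min(‖b⁻¹‖⁻¹/2, μ/(4κ)). Assume further there is b_min > 0 such that for every z ∈ ℂ with re z ≥ 0 the map b − z·id is invertible with ‖(b − z·id)⁻¹‖ ≤ b_min⁻¹; that ‖a†b⁻¹a‖ ≤ α/2; and that ‖a†(b − z·id)⁻¹a‖ ≤ α/2 for every z with re z ≥ 0. Set β = max(1,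 1/(α · b_min · ‖b⁻¹‖²)). Then for every z ∈ ℂ with re z ≥ 0 and z ≠ 0, the maps z·id − a†(b − z·id)⁻¹a and z·id − N are invertible and the resolvent difference S(z) = (z·id − a†(b − z·id)⁻¹a)⁻¹ − (z·id − N)⁻¹ satisfies ‖S(z)‖ ≤ 4βκ|z|⁻¹. -/
noncomputable section

variable {E F : Type*} [NormedAddCommGroup E] [InnerProductSpace ℂ E]
  [FiniteDimensional ℂ E] [NormedAddCommGroup F] [InnerProductSpace ℂ F]
  [FiniteDimensional ℂ F]

lemma aux_isUnit_of_lowerBound (T : E →L[ℂ] E) (c : ℝ) (hc : 0 < c)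
    (h : ∀ v, c * ‖v‖ ≤ ‖T v‖) : IsUnit T ∧ ‖Ring.inverse T‖ ≤ c⁻¹ := by
  have hinj : Function.Injective T := by
    intro u v huv
    have h1 := h (u - v)
    rw [map_sub, huv, sub_self, norm_zero] at h1
    have h2 : ‖u - v‖ ≤ 0 := by nlinarith [norm_nonneg (u - v)]
    have : u - v = 0 := by rw [← norm_le_zero_iff]; exact h2
    exact sub_eq_zero.mp this
  have hsurj : Function.Surjective T :=
    LinearMap.injective_iff_surjective.mp hinj
  let e := LinearEquiv.ofBijective (T : E →ₗ[ℂ] E) ⟨hinj, hsurj⟩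
  let S : E →L[ℂ] E := LinearMap.toContinuousLinearMap (e.symm : E →ₗ[ℂ] E)
  have hTS : T * S = 1 := by
    ext v
    exact e.apply_symm_apply v
  have hST : S * T = 1 := by
    ext v
    exact e.symm_apply_apply v
  have hu : IsUnit T := isUnit_iff_exists.mpr ⟨S, hTS, hST⟩
  have hinv : Ring.inverse T = S := by
    calc Ring.inverse T = Ring.inverse T * (T * S) := by rw [hTS, mul_one]
      _ = (Ring.inverse T * T) * S := by rw [mul_assoc]
      _ = S := by rw [Ring.inverse_mul_cancel T hu, one_mul]
  refine ⟨hu, ?_⟩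
  rw [hinv]
  refine ContinuousLinearMap.opNorm_le_bound S (inv_nonneg.mpr hc.le) fun w => ?_
  have h1 := h (S w)
  have h2 : T (S w) = w := by
    have := congrArg (fun f : E →L[ℂ] E => f w) hTS
    simpa using this
  rw [h2] at h1
  have h3 := mul_le_mul_of_nonneg_left h1 (inv_nonneg.mpr hc.le)
  rwa [← mul_assoc, inv_mul_cancel₀ hc.ne', one_mul] at h3

lemma aux_quad_lower (z : ℂ) (hz : 0 ≤ z.re) (r c : ℝ) (hr : 0 ≤ r) (hc : 0 ≤ c) :
    ‖z‖ * c ≤ ‖z * (c : ℂ) + (r : ℂ)‖ := by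
  set w : ℂ := z * (c : ℂ) + (r : ℂ) with hw
  have hwre : w.re = z.re * c + r := by simp [hw]
  have hwim : w.im = z.im * c := by simp [hw]
  have hsq : (‖z‖ * c) ^ 2 ≤ ‖w‖ ^ 2 := by
    rw [mul_pow, Complex.sq_norm, Complex.sq_norm,
      Complex.normSq_apply, Complex.normSq_apply, hwre, hwim]
    nlinarith [mul_nonneg (mul_nonneg hz hc) hr, sq_nonneg r]
  have := Real.sqrt_le_sqrt hsq
  rwa [Real.sqrt_sq (by positivity), Real.sqrt_sq (norm_nonneg w)] at this

set_option maxHeartbeats 12000000 in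
set_option synthInstance.maxHeartbeats 1000000 in
open ContinuousLinearMap in
/-- **Resolvent difference bound in the right half plane, all `z`.** -/
theorem resolventDiff_bound_right_half_plane
    [Nontrivial E] [Nontrivial F]
    (a : E →L[ℂ] F) (b : F →L[ℂ] F) (hb : IsUnit b)
    (N : E →L[ℂ] E)
    (hN : N = (ContinuousLinearMap.adjoint a).comp ((Ring.inverse b).comp a))
    (hNsa : IsSelfAdjoint N)
    (μ : ℝ) (hμ : 0 < μ)
    (hNneg : ∀ v : E, (inner ℂ v (N v) : ℂ).re ≤ -μ * ‖v‖ ^ 2)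
    (κ α : ℝ) (hκ : κ = ‖a‖ ^ 2 * ‖Ring.inverse b‖ ^ 2)
    (hα : α = min (‖Ring.inverse b‖⁻¹ / 2) (μ / (4 * κ)))
    (bmin : ℝ) (hbmin : 0 < bmin)
    (hres : ∀ z : ℂ, 0 ≤ z.re → IsUnit (b - z • (1 : F →L[ℂ] F)) ∧
      ‖Ring.inverse (b - z • (1 : F →L[ℂ] F))‖ ≤ bmin⁻¹)
    (hNα : ‖(ContinuousLinearMap.adjoint a).comp ((Ring.inverse b).comp a)‖ ≤ α / 2)
    (hNzα : ∀ z : ℂ, 0 ≤ z.re →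
      ‖(ContinuousLinearMap.adjoint a).comp
        ((Ring.inverse (b - z • (1 : F →L[ℂ] F))).comp a)‖ ≤ α / 2)
    (β : ℝ) (hβ : β = max 1 (1 / (α * bmin * ‖Ring.inverse b‖ ^ 2)))
    (z : ℂ) (hz : 0 ≤ z.re) (hz0 : z ≠ 0) :
    IsUnit (z • (1 : E →L[ℂ] E) -
      (ContinuousLinearMap.adjoint a).comp
        ((Ring.inverse (b - z • (1 : F →L[ℂ] F))).comp a)) ∧
    IsUnit (z • (1 : E →L[ℂ] E) - N) ∧
    ‖resolventDiff a b z‖ ≤ 4 * β * κ * ‖z‖⁻¹ := by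
  have hSdef : resolventDiff a b z =
      Ring.inverse (z • (1 : E →L[ℂ] E) -
        (ContinuousLinearMap.adjoint a).comp
          ((Ring.inverse (b - z • (1 : F →L[ℂ] F))).comp a)) -
      Ring.inverse (z • (1 : E →L[ℂ] E) -
        (ContinuousLinearMap.adjoint a).comp ((Ring.inverse b).comp a)) := rfl
  set A := ContinuousLinearMap.adjoint a with hA
  set Binv := Ring.inverse b with hBinvdef
  set Rz := Ring.inverse (b - z • (1 : F →L[ℂ] F)) with hRzdef
  set Nz := A.comp (Rz.comp a) with hNzdef
  obtain ⟨hzu, hRznorm⟩ := hres z hz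
  have hzpos : 0 < ‖z‖ := norm_pos_iff.mpr hz0
  have hAnorm : ‖A‖ = ‖a‖ := LinearIsometryEquiv.norm_map ContinuousLinearMap.adjoint a
  -- basic positivity facts
  obtain ⟨v₀, hv₀⟩ := exists_ne (0 : E)
  set u : E := ‖v₀‖⁻¹ • v₀ with hu
  have hunorm : ‖u‖ = 1 := by
    rw [hu, norm_smul, norm_inv, norm_norm, inv_mul_cancel₀ (norm_ne_zero_iff.mpr hv₀)]
  have hμN : μ ≤ ‖N‖ := by
    have h1 := hNneg u
    rw [hunorm] at h1
    have h2 : μ ≤ -(inner ℂ u (N u) : ℂ).re := by nlinarith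
    have h3 : -(inner ℂ u (N u) : ℂ).re ≤ ‖(inner ℂ u (N u) : ℂ)‖ := by
      exact (neg_le_abs _).trans (Complex.abs_re_le_norm _)
    have h4 : ‖(inner ℂ u (N u) : ℂ)‖ ≤ ‖u‖ * ‖N u‖ := norm_inner_le_norm u (N u)
    have h5 : ‖N u‖ ≤ ‖N‖ * ‖u‖ := le_opNorm N u
    rw [hunorm] at h4 h5
    nlinarith
  have hNle : ‖N‖ ≤ ‖a‖ * (‖Binv‖ * ‖a‖) := by
    rw [hN]
    calc ‖A.comp (Binv.comp a)‖ ≤ ‖A‖ * ‖Binv.comp a‖ := opNorm_comp_le _ _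
      _ ≤ ‖A‖ * (‖Binv‖ * ‖a‖) :=
        mul_le_mul_of_nonneg_left (opNorm_comp_le _ _) (norm_nonneg _)
      _ = ‖a‖ * (‖Binv‖ * ‖a‖) := by rw [hAnorm]
  have hapos : 0 < ‖a‖ := by
    rcases (norm_nonneg a).lt_or_eq with h | h
    · exact h
    · exfalso; rw [← h] at hNle; simp at hNle; rw [hNle] at hμN; simp at hμN; linarith
  have hBpos : 0 < ‖Binv‖ := by
    rcases (norm_nonneg Binv).lt_or_eq with h | h
    · exact h
    · exfalso; rw [← h] at hNle; simp at hNle; rw [hNle] at hμN; simp at hμN; linarith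
  have hκpos : 0 < κ := by rw [hκ]; positivity
  have hαpos : 0 < α := by
    rw [hα]; exact lt_min (by positivity) (by positivity)
  have hNα' : ‖N‖ ≤ α / 2 := by rw [hN]; exact hNα
  have hμα : μ ≤ α / 2 := hμN.trans hNα'
  have hκ8 : κ ≤ 1 / 8 := by
    have h1 : α ≤ μ / (4 * κ) := hα ▸ min_le_right _ _
    have h2 : μ ≤ μ / (4 * κ) / 2 := by linarith
    have h3 : μ / (4 * κ) * (4 * κ) = μ := div_mul_cancel₀ μ (by positivity)
    nlinarith [h2, h3, hκpos, hμ]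
  have hαB : α * ‖Binv‖ ≤ 1 / 2 := by
    have h1 : α ≤ ‖Binv‖⁻¹ / 2 := hα ▸ min_le_left _ _
    have h2 := mul_le_mul_of_nonneg_right h1 hBpos.le
    rwa [div_mul_eq_mul_div, inv_mul_cancel₀ hBpos.ne'] at h2
  -- the resolvent identity for b
  have hb1 : b * Binv = 1 := Ring.mul_inverse_cancel b hb
  have hz1 : Rz * (b - z • (1 : F →L[ℂ] F)) = 1 := Ring.inverse_mul_cancel _ hzu
  have hRzBinv : Rz - Binv = z • (Rz * Binv) := by
    calc Rz - Binv = Rz * (b * Binv) - (Rz * (b - z • (1 : F →L[ℂ] F))) * Binv := by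
          rw [hb1, hz1, mul_one, one_mul]
      _ = z • (Rz * Binv) := by
          simp only [mul_sub, sub_mul, mul_assoc, mul_smul_comm, smul_mul_assoc,
            mul_one, one_mul]
          rw [sub_sub_cancel]
  have hdiff : Nz - N = z • (A.comp ((Rz * Binv).comp a)) := by
    rw [hN, hNzdef, ← ContinuousLinearMap.comp_sub, ← ContinuousLinearMap.sub_comp,
      hRzBinv, ContinuousLinearMap.smul_comp, ContinuousLinearMap.comp_smul]
  have hdn : ∀ r : ℝ, ‖Rz‖ ≤ r → ‖Nz - N‖ ≤ ‖z‖ * (‖a‖ * (r * (‖Binv‖ * ‖a‖))) := by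
    intro r hr
    have h1 : ‖Nz - N‖ ≤ ‖z‖ * ‖A.comp ((Rz * Binv).comp a)‖ := by
      rw [hdiff]; exact ContinuousLinearMap.opNorm_smul_le _ _
    have h2 : ‖A.comp ((Rz * Binv).comp a)‖ ≤ ‖a‖ * (r * (‖Binv‖ * ‖a‖)) := by
      calc ‖A.comp ((Rz * Binv).comp a)‖ ≤ ‖A‖ * ‖(Rz * Binv).comp a‖ := opNorm_comp_le _ _
        _ ≤ ‖A‖ * (‖Rz * Binv‖ * ‖a‖) :=
            mul_le_mul_of_nonneg_left
              (opNorm_comp_le _ _) (norm_nonneg _)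
        _ ≤ ‖A‖ * ((‖Rz‖ * ‖Binv‖) * ‖a‖) :=
            mul_le_mul_of_nonneg_left
              (mul_le_mul_of_nonneg_right (norm_mul_le _ _) (norm_nonneg _)) (norm_nonneg _)
        _ ≤ ‖a‖ * ((r * ‖Binv‖) * ‖a‖) := by
            rw [hAnorm]
            have : ‖Rz‖ * ‖Binv‖ ≤ r * ‖Binv‖ :=
              mul_le_mul_of_nonneg_right hr (norm_nonneg _)
            nlinarith [norm_nonneg a, norm_nonneg Binv]
        _ = ‖a‖ * (r * (‖Binv‖ * ‖a‖)) := by ring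
    exact h1.trans (mul_le_mul_of_nonneg_left h2 (norm_nonneg z))
  have hRz2 : ‖z‖ ≤ α → ‖Rz‖ ≤ 2 * ‖Binv‖ := by
    intro hzα
    have h1 : Rz = Binv + z • (Rz * Binv) := by rw [← hRzBinv]; abel
    have h2 : ‖Rz‖ ≤ ‖Binv‖ + ‖z‖ * (‖Rz‖ * ‖Binv‖) := by
      calc ‖Rz‖ = ‖Binv + z • (Rz * Binv)‖ := by rw [← h1]
        _ ≤ ‖Binv‖ + ‖z • (Rz * Binv)‖ := norm_add_le _ _
        _ ≤ ‖Binv‖ + ‖z‖ * (‖Rz‖ * ‖Binv‖) := by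
            have := (ContinuousLinearMap.opNorm_smul_le z (Rz * Binv)).trans
              (mul_le_mul_of_nonneg_left (norm_mul_le _ _) (norm_nonneg z))
            linarith
    have h3 : ‖z‖ * ‖Binv‖ ≤ 1 / 2 :=
      le_trans (mul_le_mul_of_nonneg_right hzα (norm_nonneg _)) hαB
    nlinarith [norm_nonneg Rz]
  have hdsmall : ‖z‖ ≤ α → ‖Nz - N‖ ≤ 2 * κ * ‖z‖ := by
    intro hzα
    calc ‖Nz - N‖ ≤ ‖z‖ * (‖a‖ * ((2 * ‖Binv‖) * (‖Binv‖ * ‖a‖))) := hdn _ (hRz2 hzα)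
      _ = 2 * κ * ‖z‖ := by rw [hκ]; ring
  -- self-adjointness: quadratic form of N is real
  have hNreal : ∀ v : E, (inner ℂ v (N v) : ℂ) = (((inner ℂ v (N v) : ℂ).re : ℝ) : ℂ) := by
    intro v
    have h1 : (starRingEnd ℂ) (inner ℂ v (N v) : ℂ) = (inner ℂ v (N v) : ℂ) := by
      rw [inner_conj_symm]
      conv_lhs => rw [← ContinuousLinearMap.isSelfAdjoint_iff'.mp hNsa]
      exact ContinuousLinearMap.adjoint_inner_left N v v
    exact (Complex.conj_eq_iff_re.mp h1).symm
  have hipT : ∀ (M : E →L[ℂ] E) (v : E), (inner ℂ v ((z • (1 : E →L[ℂ] E) - M) v) : ℂ)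
      = z * ((‖v‖ : ℂ) ^ 2) - inner ℂ v (M v) := by
    intro M v
    have h0 : (z • (1 : E →L[ℂ] E) - M) v = z • v - M v := by simp
    rw [h0, inner_sub_right, inner_smul_right, inner_self_eq_norm_sq_to_K]
    norm_cast
  -- lower bound for z - N
  have hT0low : ∀ v : E, ‖z‖ * ‖v‖ ≤ ‖(z • (1 : E →L[ℂ] E) - N) v‖ := by
    intro v
    rcases (norm_nonneg v).lt_or_eq with hv | hv
    · have hkey : ‖z‖ * ‖v‖ ^ 2 ≤ ‖(inner ℂ v ((z • (1 : E →L[ℂ] E) - N) v) : ℂ)‖ := by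
        rw [hipT N v, hNreal v]
        have heq : z * ((‖v‖ : ℂ) ^ 2) - (((inner ℂ v (N v) : ℂ).re : ℝ) : ℂ)
            = z * ((‖v‖ ^ 2 : ℝ) : ℂ) + ((-(inner ℂ v (N v) : ℂ).re : ℝ) : ℂ) := by
          push_cast; ring
        rw [heq]
        exact aux_quad_lower z hz _ _ (by nlinarith [hNneg v, sq_nonneg ‖v‖]) (by positivity)
      have hCS := norm_inner_le_norm (𝕜 := ℂ) v ((z • (1 : E →L[ℂ] E) - N) v)
      nlinarith [hkey.trans hCS, hv]
    · rw [← hv, mul_zero]; exact norm_nonneg _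
  -- lower bound for z - Nz
  have hNzn : ‖Nz‖ ≤ α / 2 := hNzα z hz
  have hTlow : ∀ v : E, (‖z‖ / 2) * ‖v‖ ≤ ‖(z • (1 : E →L[ℂ] E) - Nz) v‖ := by
    intro v
    rcases (norm_nonneg v).lt_or_eq with hv | hv
    · have hCS := norm_inner_le_norm (𝕜 := ℂ) v ((z • (1 : E →L[ℂ] E) - Nz) v)
      have hkey : (‖z‖ / 2) * ‖v‖ ^ 2 ≤ ‖(inner ℂ v ((z • (1 : E →L[ℂ] E) - Nz) v) : ℂ)‖ := by
        rcases le_or_gt ‖z‖ α with hsz | hbz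
        · -- small z
          have hd := hdsmall hsz
          have herr : ‖(inner ℂ v ((Nz - N) v) : ℂ)‖ ≤ (‖z‖ / 4) * ‖v‖ ^ 2 := by
            calc ‖(inner ℂ v ((Nz - N) v) : ℂ)‖ ≤ ‖v‖ * ‖(Nz - N) v‖ := norm_inner_le_norm _ _
              _ ≤ ‖v‖ * (‖Nz - N‖ * ‖v‖) :=
                  mul_le_mul_of_nonneg_left (le_opNorm _ _) (norm_nonneg _)
              _ ≤ ‖v‖ * ((2 * κ * ‖z‖) * ‖v‖) :=
                  mul_le_mul_of_nonneg_left
                    (mul_le_mul_of_nonneg_right hd (norm_nonneg _)) (norm_nonneg _)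
              _ ≤ (‖z‖ / 4) * ‖v‖ ^ 2 := by
                  nlinarith [mul_nonneg (mul_nonneg
                    (by linarith : (0:ℝ) ≤ 1/4 - 2*κ) hzpos.le) (sq_nonneg ‖v‖)]
          have hsplit : (inner ℂ v ((z • (1 : E →L[ℂ] E) - Nz) v) : ℂ)
              = (z * ((‖v‖ ^ 2 : ℝ) : ℂ) + ((-(inner ℂ v (N v) : ℂ).re : ℝ) : ℂ))
                - inner ℂ v ((Nz - N) v) := by
            rw [hipT Nz v]
            have h5 : (inner ℂ v ((Nz - N) v) : ℂ) = inner ℂ v (Nz v) - inner ℂ v (N v) := by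
              rw [ContinuousLinearMap.sub_apply, inner_sub_right]
            rw [h5]
            nth_rewrite 2 [hNreal v]
            push_cast
            ring
          rw [hsplit]
          have hquad := aux_quad_lower z hz (-(inner ℂ v (N v) : ℂ).re) (‖v‖ ^ 2)
            (by nlinarith [hNneg v, sq_nonneg ‖v‖]) (by positivity)
          calc (‖z‖ / 2) * ‖v‖ ^ 2
              ≤ ‖z‖ * ‖v‖ ^ 2 - (‖z‖ / 4) * ‖v‖ ^ 2 := by nlinarith [sq_nonneg ‖v‖, hzpos]
            _ ≤ ‖z * ((‖v‖ ^ 2 : ℝ) : ℂ) + ((-(inner ℂ v (N v) : ℂ).re : ℝ) : ℂ)‖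
                - ‖(inner ℂ v ((Nz - N) v) : ℂ)‖ := sub_le_sub hquad herr
            _ ≤ ‖(z * ((‖v‖ ^ 2 : ℝ) : ℂ) + ((-(inner ℂ v (N v) : ℂ).re : ℝ) : ℂ))
                - inner ℂ v ((Nz - N) v)‖ := norm_sub_norm_le _ _
        · -- large z
          rw [hipT Nz v]
          have h1 : ‖(inner ℂ v (Nz v) : ℂ)‖ ≤ (α / 2) * ‖v‖ ^ 2 := by
            calc ‖(inner ℂ v (Nz v) : ℂ)‖ ≤ ‖v‖ * ‖Nz v‖ := norm_inner_le_norm _ _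
              _ ≤ ‖v‖ * (‖Nz‖ * ‖v‖) :=
                  mul_le_mul_of_nonneg_left (le_opNorm _ _) (norm_nonneg _)
              _ ≤ ‖v‖ * ((α / 2) * ‖v‖) :=
                  mul_le_mul_of_nonneg_left
                    (mul_le_mul_of_nonneg_right hNzn (norm_nonneg _)) (norm_nonneg _)
              _ = (α / 2) * ‖v‖ ^ 2 := by ring
          have h2 : ‖z * ((‖v‖ : ℂ) ^ 2)‖ = ‖z‖ * ‖v‖ ^ 2 := by
            rw [norm_mul, norm_pow, Complex.norm_real, Real.norm_eq_abs, abs_norm]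
          calc (‖z‖ / 2) * ‖v‖ ^ 2
              ≤ ‖z‖ * ‖v‖ ^ 2 - (α / 2) * ‖v‖ ^ 2 := by nlinarith [sq_nonneg ‖v‖]
            _ ≤ ‖z * ((‖v‖ : ℂ) ^ 2)‖ - ‖(inner ℂ v (Nz v) : ℂ)‖ :=
                sub_le_sub (le_of_eq h2.symm) h1
            _ ≤ ‖z * ((‖v‖ : ℂ) ^ 2) - inner ℂ v (Nz v)‖ := norm_sub_norm_le _ _
      nlinarith [hkey.trans hCS, hv]
    · rw [← hv, mul_zero]; exact norm_nonneg _
  obtain ⟨huT, hinvT⟩ :=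
    aux_isUnit_of_lowerBound (z • (1 : E →L[ℂ] E) - Nz) (‖z‖ / 2) (by positivity) hTlow
  obtain ⟨huT0, hinvT0⟩ :=
    aux_isUnit_of_lowerBound (z • (1 : E →L[ℂ] E) - N) ‖z‖ hzpos hT0low
  refine ⟨huT, huT0, ?_⟩
  -- the second resolvent identity
  set iT := Ring.inverse (z • (1 : E →L[ℂ] E) - Nz) with hiT
  set iT0 := Ring.inverse (z • (1 : E →L[ℂ] E) - N) with hiT0
  have hS : resolventDiff a b z = iT * (Nz - N) * iT0 := by
    have e1 : iT * (z • (1 : E →L[ℂ] E) - Nz) = 1 := Ring.inverse_mul_cancel _ huT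
    have e2 : (z • (1 : E →L[ℂ] E) - N) * iT0 = 1 := Ring.mul_inverse_cancel _ huT0
    have h0 : resolventDiff a b z = iT - iT0 := by
      rw [hSdef, hiT, hiT0, hN]
    rw [h0]
    calc iT - iT0
        = iT * ((z • (1 : E →L[ℂ] E) - N) * iT0) - (iT * (z • (1 : E →L[ℂ] E) - Nz)) * iT0 := by
          rw [e2, e1, mul_one, one_mul]
      _ = iT * (Nz - N) * iT0 := by noncomm_ring
  have hprod : ‖resolventDiff a b z‖ ≤ (‖z‖ / 2)⁻¹ * ‖Nz - N‖ * ‖z‖⁻¹ := by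
    rw [hS]
    calc ‖iT * (Nz - N) * iT0‖ ≤ ‖iT * (Nz - N)‖ * ‖iT0‖ := norm_mul_le _ _
      _ ≤ (‖iT‖ * ‖Nz - N‖) * ‖iT0‖ :=
          mul_le_mul_of_nonneg_right (norm_mul_le _ _) (norm_nonneg _)
      _ ≤ ((‖z‖ / 2)⁻¹ * ‖Nz - N‖) * ‖z‖⁻¹ := by
          have hh1 : ‖iT‖ * ‖Nz - N‖ ≤ (‖z‖ / 2)⁻¹ * ‖Nz - N‖ :=
            mul_le_mul_of_nonneg_right hinvT (norm_nonneg _)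
          have hh2 := mul_le_mul hh1 hinvT0 (norm_nonneg _)
            (by positivity)
          exact hh2
  have hβ1 : (1 : ℝ) ≤ β := hβ ▸ le_max_left _ _
  rcases le_or_gt ‖z‖ α with hsz | hbz
  · -- small z
    have hd := hdsmall hsz
    calc ‖resolventDiff a b z‖ ≤ (‖z‖ / 2)⁻¹ * ‖Nz - N‖ * ‖z‖⁻¹ := hprod
      _ ≤ (‖z‖ / 2)⁻¹ * (2 * κ * ‖z‖) * ‖z‖⁻¹ := by
          have := mul_le_mul_of_nonneg_left hd (by positivity : (0:ℝ) ≤ (‖z‖ / 2)⁻¹)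
          exact mul_le_mul_of_nonneg_right this (by positivity)
      _ = 4 * κ * ‖z‖⁻¹ := by
          have hzz : ‖z‖ ≠ 0 := hzpos.ne'
          generalize hgen : ‖z‖ = t at hzz ⊢
          field_simp
          ring
      _ ≤ 4 * β * κ * ‖z‖⁻¹ := by
          have h0 : (0:ℝ) < ‖z‖⁻¹ := by positivity
          nlinarith [mul_nonneg (mul_nonneg (by linarith : (0:ℝ) ≤ β - 1) hκpos.le) h0.le]
  · -- large z
    have hd : ‖Nz - N‖ ≤ ‖z‖ * (κ / (bmin * ‖Binv‖)) := by
      calc ‖Nz - N‖ ≤ ‖z‖ * (‖a‖ * (bmin⁻¹ * (‖Binv‖ * ‖a‖))) := hdn _ hRznorm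
        _ = ‖z‖ * (κ / (bmin * ‖Binv‖)) := by
            rw [hκ]; field_simp
    have hβ2 : 1 / (α * bmin * ‖Binv‖ ^ 2) ≤ β := hβ ▸ le_max_right _ _
    have hβ3 : 1 ≤ β * (α * bmin * ‖Binv‖ ^ 2) := by
      have hD : (0:ℝ) < α * bmin * ‖Binv‖ ^ 2 := by positivity
      calc (1:ℝ) = (1 / (α * bmin * ‖Binv‖ ^ 2)) * (α * bmin * ‖Binv‖ ^ 2) := by
            field_simp
        _ ≤ β * (α * bmin * ‖Binv‖ ^ 2) := mul_le_mul_of_nonneg_right hβ2 hD.le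
    have key : κ / (bmin * ‖Binv‖) ≤ 2 * β * κ := by
      rw [div_le_iff₀ (by positivity)]
      nlinarith [hβ3, hαB, hκpos, hbmin, hBpos, hβ1,
        mul_le_mul_of_nonneg_left hβ3 hκpos.le,
        mul_pos (mul_pos (by linarith : (0:ℝ) < β) hκpos) (mul_pos hbmin hBpos)]
    calc ‖resolventDiff a b z‖ ≤ (‖z‖ / 2)⁻¹ * ‖Nz - N‖ * ‖z‖⁻¹ := hprod
      _ ≤ (‖z‖ / 2)⁻¹ * (‖z‖ * (κ / (bmin * ‖Binv‖))) * ‖z‖⁻¹ := by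
          have := mul_le_mul_of_nonneg_left hd (by positivity : (0:ℝ) ≤ (‖z‖ / 2)⁻¹)
          exact mul_le_mul_of_nonneg_right this (by positivity)
      _ = 2 * (κ / (bmin * ‖Binv‖)) * ‖z‖⁻¹ := by
          have hzz : ‖z‖ ≠ 0 := hzpos.ne'
          have hmm : bmin ≠ 0 := hbmin.ne'
          have hBB : ‖Binv‖ ≠ 0 := hBpos.ne'
          generalize hgen : ‖z‖ = t at hzz ⊢
          field_simp
      _ ≤ 2 * (2 * β * κ) * ‖z‖⁻¹ := by
          have h0 : (0:ℝ) ≤ ‖z‖⁻¹ := by positivity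
          nlinarith [key, h0]
      _ = 4 * β * κ * ‖z‖⁻¹ := by ring
end
end

section
/- Let E and F be nonzero finite-dimensional complex inner product spaces, a : E → F and b : F → F continuous linear maps with b invertible, a† the adjoint of a, κ = ‖a‖²‖b⁻¹‖². Assume N := a† b⁻¹ a is self-adjoint and there is μ > 0 with re⟨v, N v⟩ ≤ −μ‖v‖² for all v ∈ E. Set α̂ = min(‖b⁻¹‖⁻¹/2, μ/(8κ)) − μ and assume α̂ > 0. Then for every μ̃ with 0 ≤ μ̃ ≤ μ/2 and every y ∈ ℝ with |y| ≤ α̂, writing z = i y − μ̃: the maps b − z·id, z·id − a†(b − z·id)⁻¹a, and z·id − N are all invertible; the resolvent difference S(z) = (z·id − a†(b − z·id)⁻¹a)⁻¹ − (z·id − N)⁻¹ satisfies ‖S(z)‖ ≤ 16κμ⁻²|i y − μ̃|; and if in addition y ≠ 0 then also ‖S(z)‖ ≤ 4κ|y|⁻²|i y − μ̃|. -/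
noncomputable section

variable {E F : Type*} [NormedAddCommGroup E] [InnerProductSpace ℂ E]
  [FiniteDimensional ℂ E] [NormedAddCommGroup F] [InnerProductSpace ℂ F]
  [FiniteDimensional ℂ F]

lemma isUnit_of_coercive' {E : Type*} [NormedAddCommGroup E] [NormedSpace ℂ E]
    [FiniteDimensional ℂ E] (T : E →L[ℂ] E) (c : ℝ) (hc : 0 < c)
    (h : ∀ v, c * ‖v‖ ≤ ‖T v‖) : IsUnit T := by
  have hinj : Function.Injective T := by
    intro v w hvw
    have h2 := h (v - w)
    rw [map_sub, hvw, sub_self, norm_zero] at h2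
    have h3 : ‖v - w‖ ≤ 0 := nonpos_of_mul_nonpos_right (by linarith) hc
    have h4 : v - w = 0 := by rw [← norm_le_zero_iff]; exact h3
    exact sub_eq_zero.mp h4
  have hbij : Function.Bijective T.toLinearMap :=
    ⟨hinj, (LinearMap.injective_iff_surjective).mp hinj⟩
  let e := (LinearEquiv.ofBijective T.toLinearMap hbij).toContinuousLinearEquiv
  have he : (e : E →L[ℂ] E) = T := by ext v; rfl
  exact ⟨(ContinuousLinearEquiv.unitsEquiv ℂ E).symm e, he⟩

lemma norm_inverse_le_of_coercive' {E : Type*} [NormedAddCommGroup E] [NormedSpace ℂ E]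
    (T : E →L[ℂ] E) (hT : IsUnit T) (c : ℝ) (hc : 0 < c)
    (h : ∀ v, c * ‖v‖ ≤ ‖T v‖) : ‖Ring.inverse T‖ ≤ c⁻¹ := by
  apply ContinuousLinearMap.opNorm_le_bound _ (by positivity)
  intro w
  have hTw : T (Ring.inverse T w) = w := by
    have h1 := Ring.mul_inverse_cancel T hT
    calc T (Ring.inverse T w) = (T * Ring.inverse T) w := rfl
    _ = w := by rw [h1]; rfl
  have h2 := h (Ring.inverse T w)
  rw [hTw] at h2
  rw [inv_mul_eq_div, le_div_iff₀ hc, mul_comm]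
  exact h2

lemma ring_inverse_sub_inverse {R : Type*} [Ring R] (x y : R) (hx : IsUnit x) (hy : IsUnit y) :
    Ring.inverse x - Ring.inverse y = Ring.inverse x * (y - x) * Ring.inverse y := by
  have h1 : y * Ring.inverse y = 1 := Ring.mul_inverse_cancel _ hy
  have h2 : Ring.inverse x * x = 1 := Ring.inverse_mul_cancel _ hx
  calc Ring.inverse x - Ring.inverse y
      = Ring.inverse x * (y * Ring.inverse y) - (Ring.inverse x * x) * Ring.inverse y := by
        rw [h1, h2, mul_one, one_mul]
    _ = _ := by noncomm_ring

set_option maxHeartbeats 1600000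

/-- **Resolvent difference bounds on the line `re z = −μ̃`, small `|y|`.** -/
theorem resolventDiff_bound_shifted_small_y
    [Nontrivial E] [Nontrivial F]
    (a : E →L[ℂ] F) (b : F →L[ℂ] F) (hb : IsUnit b)
    (N : E →L[ℂ] E)
    (hN : N = (ContinuousLinearMap.adjoint a).comp ((Ring.inverse b).comp a))
    (hNsa : IsSelfAdjoint N)
    (μ : ℝ) (hμ : 0 < μ)
    (hNneg : ∀ v : E, (inner ℂ v (N v) : ℂ).re ≤ -μ * ‖v‖ ^ 2)
    (κ αh : ℝ) (hκ : κ = ‖a‖ ^ 2 * ‖Ring.inverse b‖ ^ 2)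
    (hαh : αh = min (‖Ring.inverse b‖⁻¹ / 2) (μ / (8 * κ)) - μ)
    (hαhpos : 0 < αh)
    (μt : ℝ) (hμt0 : 0 ≤ μt) (hμt : μt ≤ μ / 2)
    (y : ℝ) (hy : |y| ≤ αh) :
    IsUnit (b - (Complex.I * y - μt) • (1 : F →L[ℂ] F)) ∧
    IsUnit ((Complex.I * y - μt) • (1 : E →L[ℂ] E) -
      (ContinuousLinearMap.adjoint a).comp
        ((Ring.inverse (b - (Complex.I * y - μt) • (1 : F →L[ℂ] F))).comp a)) ∧
    IsUnit ((Complex.I * y - μt) • (1 : E →L[ℂ] E) - N) ∧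
    ‖resolventDiff a b (Complex.I * y - μt)‖ ≤
      16 * κ * (μ ^ 2)⁻¹ * ‖Complex.I * y - μt‖ ∧
    (y ≠ 0 → ‖resolventDiff a b (Complex.I * y - μt)‖ ≤
      4 * κ * (|y| ^ 2)⁻¹ * ‖Complex.I * y - μt‖) := by
  set z : ℂ := Complex.I * y - μt with hzdef
  -- basic facts about z
  have hzre : z.re = -μt := by simp [hzdef]
  have hzim : z.im = y := by simp [hzdef]
  have hznorm : ‖z‖ ≤ |y| + μt := by
    calc ‖z‖ ≤ ‖Complex.I * (y:ℂ)‖ + ‖(μt:ℂ)‖ := norm_sub_le _ _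
    _ = |y| + μt := by
        simp [abs_of_nonneg hμt0]
  -- positivity of norms
  have hβpos : 0 < ‖Ring.inverse b‖ := by
    rw [norm_pos_iff]
    intro h0
    have h1 := Ring.mul_inverse_cancel b hb
    rw [h0, mul_zero] at h1
    obtain ⟨x, hx⟩ := exists_ne (0 : F)
    have h2 : (0 : F →L[ℂ] F) x = (1 : F →L[ℂ] F) x := by rw [h1]
    simp at h2
    exact hx h2.symm
  have hapos : 0 < ‖a‖ := by
    rw [norm_pos_iff]
    intro h0
    obtain ⟨v, hv⟩ := exists_ne (0 : E)
    have h1 := hNneg v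
    rw [hN, h0] at h1
    simp at h1
    have hv' : (0:ℝ) < ‖v‖ := norm_pos_iff.mpr hv
    have h2 : (0:ℝ) < μ * ‖v‖ ^ 2 := mul_pos hμ (pow_pos hv' 2)
    linarith
  have hκpos : 0 < κ := by
    rw [hκ]; exact mul_pos (pow_pos hapos 2) (pow_pos hβpos 2)
  -- numeric facts
  have hmin1 : αh ≤ ‖Ring.inverse b‖⁻¹ / 2 - μ := by
    rw [hαh]
    have := min_le_left (‖Ring.inverse b‖⁻¹ / 2) (μ / (8 * κ))
    linarith
  have hmin2 : αh ≤ μ / (8 * κ) - μ := by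
    rw [hαh]
    have := min_le_right (‖Ring.inverse b‖⁻¹ / 2) (μ / (8 * κ))
    linarith
  have hz1 : ‖z‖ ≤ ‖Ring.inverse b‖⁻¹ / 2 - μ / 2 := by linarith
  have hz2 : ‖z‖ ≤ μ / (8 * κ) - μ / 2 := by linarith
  have hκz : 2 * κ * ‖z‖ ≤ μ / 4 := by
    have h := mul_le_mul_of_nonneg_left hz2 (by positivity : (0:ℝ) ≤ 2 * κ)
    have he : 2 * κ * (μ / (8 * κ) - μ / 2) = μ / 4 - κ * μ := by field_simp; ring
    nlinarith [mul_pos hκpos hμ]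
  -- coercivity of b - z
  have hzb : ‖z‖ ≤ ‖Ring.inverse b‖⁻¹ / 2 := by linarith
  have hcoB : ∀ v : F, ‖Ring.inverse b‖⁻¹ / 2 * ‖v‖ ≤ ‖(b - z • (1 : F →L[ℂ] F)) v‖ := by
    intro v
    have h0 : Ring.inverse b (b v) = v := by
      have h1 := Ring.inverse_mul_cancel b hb
      calc Ring.inverse b (b v) = (Ring.inverse b * b) v := rfl
      _ = v := by rw [h1]; rfl
    have h1 : ‖v‖ ≤ ‖Ring.inverse b‖ * ‖b v‖ := by
      calc ‖v‖ = ‖Ring.inverse b (b v)‖ := by rw [h0]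
      _ ≤ ‖Ring.inverse b‖ * ‖b v‖ := (Ring.inverse b).le_opNorm _
    have h2 : ‖Ring.inverse b‖⁻¹ * ‖v‖ ≤ ‖b v‖ := by
      rw [inv_mul_le_iff₀ hβpos]
      exact h1
    have h3 : ‖b v‖ - ‖z‖ * ‖v‖ ≤ ‖(b - z • (1 : F →L[ℂ] F)) v‖ := by
      have hap : (b - z • (1 : F →L[ℂ] F)) v = b v - z • v := by simp
      rw [hap]
      calc ‖b v‖ - ‖z‖ * ‖v‖ = ‖b v‖ - ‖z • v‖ := by rw [norm_smul]
      _ ≤ ‖b v - z • v‖ := norm_sub_norm_le _ _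
    nlinarith [mul_le_mul_of_nonneg_right hzb (norm_nonneg v)]
  have hUb : IsUnit (b - z • (1 : F →L[ℂ] F)) := isUnit_of_coercive' _ _ (by positivity) hcoB
  have hRb : ‖Ring.inverse (b - z • (1 : F →L[ℂ] F))‖ ≤ 2 * ‖Ring.inverse b‖ := by
    have h := norm_inverse_le_of_coercive' _ hUb _ (by positivity) hcoB
    calc ‖Ring.inverse (b - z • (1 : F →L[ℂ] F))‖ ≤ (‖Ring.inverse b‖⁻¹ / 2)⁻¹ := h
    _ = 2 * ‖Ring.inverse b‖ := by rw [inv_div]; field_simp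
  -- self-adjointness facts
  have hadj : ContinuousLinearMap.adjoint N = N := by
    rwa [← ContinuousLinearMap.star_eq_adjoint]
  have him : ∀ v : E, (inner ℂ v (N v) : ℂ).im = 0 := by
    intro v
    have h1 : (inner ℂ v (N v) : ℂ) = (starRingEnd ℂ) (inner ℂ v (N v) : ℂ) := by
      calc (inner ℂ v (N v) : ℂ) = inner ℂ (ContinuousLinearMap.adjoint N v) v := by
            rw [ContinuousLinearMap.adjoint_inner_left]
      _ = inner ℂ (N v) v := by rw [hadj]
      _ = (starRingEnd ℂ) (inner ℂ v (N v) : ℂ) := (inner_conj_symm _ _).symm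
    have h2 := congrArg Complex.im h1
    simp only [Complex.conj_im] at h2
    linarith
  -- inner product formula for z•1 - N
  have hinner : ∀ v : E, (inner ℂ v ((z • (1 : E →L[ℂ] E) - N) v) : ℂ)
      = z * ((‖v‖ ^ 2 : ℝ) : ℂ) - inner ℂ v (N v) := by
    intro v
    simp only [ContinuousLinearMap.sub_apply, ContinuousLinearMap.smul_apply,
      ContinuousLinearMap.one_apply, inner_sub_right, inner_smul_right,
      inner_self_eq_norm_sq_to_K]
    push_cast
    with_unfolding_all rfl
  have hre : ∀ v : E, (inner ℂ v ((z • (1 : E →L[ℂ] E) - N) v) : ℂ).re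
      = -μt * ‖v‖ ^ 2 - (inner ℂ v (N v) : ℂ).re := by
    intro v
    rw [hinner v]
    simp only [← Complex.ofReal_pow, Complex.sub_re, Complex.mul_re, Complex.ofReal_re,
      Complex.ofReal_im, hzre]
    ring
  have him2 : ∀ v : E, (inner ℂ v ((z • (1 : E →L[ℂ] E) - N) v) : ℂ).im = y * ‖v‖ ^ 2 := by
    intro v
    rw [hinner v]
    simp only [← Complex.ofReal_pow, Complex.sub_im, Complex.mul_im, Complex.ofReal_re,
      Complex.ofReal_im, hzim, him v]
    ring
  have hcs : ∀ v : E, ‖(inner ℂ v ((z • (1 : E →L[ℂ] E) - N) v) : ℂ)‖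
      ≤ ‖v‖ * ‖(z • (1 : E →L[ℂ] E) - N) v‖ := fun v => norm_inner_le_norm _ _
  -- coercivity of z•1 - N
  have hcoN : ∀ v : E, μ / 2 * ‖v‖ ≤ ‖(z • (1 : E →L[ℂ] E) - N) v‖ := by
    intro v
    rcases eq_or_ne v 0 with h | h
    · simp [h]
    · have hv : 0 < ‖v‖ := norm_pos_iff.mpr h
      have h1 : μ / 2 * ‖v‖ ^ 2 ≤ (inner ℂ v ((z • (1 : E →L[ℂ] E) - N) v) : ℂ).re := by
        rw [hre v]
        linarith [hNneg v, mul_le_mul_of_nonneg_right hμt (sq_nonneg ‖v‖)]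
      have h2 : (inner ℂ v ((z • (1 : E →L[ℂ] E) - N) v) : ℂ).re
          ≤ ‖v‖ * ‖(z • (1 : E →L[ℂ] E) - N) v‖ :=
        le_trans (Complex.re_le_norm _) (hcs v)
      have h3 : μ / 2 * ‖v‖ ^ 2 ≤ ‖v‖ * ‖(z • (1 : E →L[ℂ] E) - N) v‖ := le_trans h1 h2
      have h4 : ‖v‖ * (μ / 2 * ‖v‖) ≤ ‖v‖ * ‖(z • (1 : E →L[ℂ] E) - N) v‖ := by
        rw [pow_two] at h3; linarith
      exact le_of_mul_le_mul_left h4 hv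
  have hcoNy : ∀ v : E, |y| * ‖v‖ ≤ ‖(z • (1 : E →L[ℂ] E) - N) v‖ := by
    intro v
    rcases eq_or_ne v 0 with h | h
    · simp [h]
    · have hv : 0 < ‖v‖ := norm_pos_iff.mpr h
      have h1 : |y| * ‖v‖ ^ 2 ≤ ‖(inner ℂ v ((z • (1 : E →L[ℂ] E) - N) v) : ℂ)‖ := by
        calc |y| * ‖v‖ ^ 2 = |y * ‖v‖ ^ 2| := by
              rw [abs_mul, abs_of_nonneg (sq_nonneg ‖v‖)]
        _ = |(inner ℂ v ((z • (1 : E →L[ℂ] E) - N) v) : ℂ).im| := by rw [him2 v]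
        _ ≤ ‖(inner ℂ v ((z • (1 : E →L[ℂ] E) - N) v) : ℂ)‖ := by
              exact Complex.abs_im_le_norm _
      have h2 := le_trans h1 (hcs v)
      have h4 : ‖v‖ * (|y| * ‖v‖) ≤ ‖v‖ * ‖(z • (1 : E →L[ℂ] E) - N) v‖ := by
        rw [pow_two] at h2; linarith
      exact le_of_mul_le_mul_left h4 hv
  have hUN : IsUnit (z • (1 : E →L[ℂ] E) - N) := isUnit_of_coercive' _ _ (by positivity) hcoN
  have hRN : ‖Ring.inverse (z • (1 : E →L[ℂ] E) - N)‖ ≤ (μ / 2)⁻¹ :=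
    norm_inverse_le_of_coercive' _ hUN _ (by positivity) hcoN
  -- the perturbation D = H - N
  set H : E →L[ℂ] E := (ContinuousLinearMap.adjoint a).comp
      ((Ring.inverse (b - z • (1 : F →L[ℂ] F))).comp a) with hHdef
  have hMid : Ring.inverse (b - z • (1 : F →L[ℂ] F)) - Ring.inverse b
      = Ring.inverse (b - z • (1 : F →L[ℂ] F)) * (z • (1 : F →L[ℂ] F)) * Ring.inverse b := by
    rw [ring_inverse_sub_inverse _ _ hUb hb, sub_sub_cancel]
  have hD : H - N = (ContinuousLinearMap.adjoint a).comp
      ((Ring.inverse (b - z • (1 : F →L[ℂ] F)) - Ring.inverse b).comp a) := by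
    rw [hN, hHdef]
    ext v
    simp
  have hMnorm : ‖Ring.inverse (b - z • (1 : F →L[ℂ] F)) - Ring.inverse b‖
      ≤ 2 * ‖Ring.inverse b‖ * ‖z‖ * ‖Ring.inverse b‖ := by
    rw [hMid]
    have h1 : ‖z • (1 : F →L[ℂ] F)‖ = ‖z‖ := by
      have h := norm_smul z (1 : F →L[ℂ] F)
      rw [h, norm_one, mul_one]
    calc ‖Ring.inverse (b - z • (1 : F →L[ℂ] F)) * (z • (1 : F →L[ℂ] F)) * Ring.inverse b‖
        ≤ ‖Ring.inverse (b - z • (1 : F →L[ℂ] F)) * (z • (1 : F →L[ℂ] F))‖ * ‖Ring.inverse b‖ :=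
          norm_mul_le _ _
    _ ≤ ‖Ring.inverse (b - z • (1 : F →L[ℂ] F))‖ * ‖z • (1 : F →L[ℂ] F)‖ * ‖Ring.inverse b‖ :=
          mul_le_mul_of_nonneg_right (norm_mul_le _ _) (norm_nonneg _)
    _ ≤ 2 * ‖Ring.inverse b‖ * ‖z‖ * ‖Ring.inverse b‖ := by
          rw [h1]
          gcongr
  have hadjn : ‖ContinuousLinearMap.adjoint a‖ = ‖a‖ := LinearIsometryEquiv.norm_map _ a
  have hDnorm : ‖H - N‖ ≤ 2 * κ * ‖z‖ := by
    rw [hD]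
    calc ‖(ContinuousLinearMap.adjoint
              a).comp ((Ring.inverse (b - z • (1 : F →L[ℂ] F)) - Ring.inverse b).comp a)‖
        ≤ ‖ContinuousLinearMap.adjoint
              a‖ * ‖(Ring.inverse (b - z • (1 : F →L[ℂ] F)) - Ring.inverse b).comp a‖ :=
          ContinuousLinearMap.opNorm_comp_le _ _
    _ ≤ ‖ContinuousLinearMap.adjoint
            a‖ * (‖Ring.inverse (b - z • (1 : F →L[ℂ] F)) - Ring.inverse b‖ * ‖a‖) := by
          gcongr
          exact ContinuousLinearMap.opNorm_comp_le _ _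
    _ ≤ 2 * κ * ‖z‖ := by
          rw [hadjn, hκ]
          have h2 := mul_le_mul_of_nonneg_left hMnorm
            (mul_nonneg (norm_nonneg a) (norm_nonneg a))
          nlinarith [norm_nonneg z, norm_nonneg a, norm_nonneg (Ring.inverse b)]
  have hDμ : ‖H - N‖ ≤ μ / 4 := le_trans hDnorm hκz
  -- coercivity of z•1 - H
  have hcoH : ∀ v : E, μ / 4 * ‖v‖ ≤ ‖(z • (1 : E →L[ℂ] E) - H) v‖ := by
    intro v
    have h1 : (z • (1 : E →L[ℂ] E) - H) v
        = (z • (1 : E →L[ℂ] E) - N) v - (H - N) v := by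
      simp only [ContinuousLinearMap.sub_apply]
      abel
    rw [h1]
    have h3 : ‖(H - N) v‖ ≤ μ / 4 * ‖v‖ :=
      le_trans ((H - N).le_opNorm v) (mul_le_mul_of_nonneg_right hDμ (norm_nonneg v))
    have h4 := hcoN v
    linarith [norm_sub_norm_le ((z • (1 : E →L[ℂ] E) - N) v) ((H - N) v)]
  have hUH : IsUnit (z • (1 : E →L[ℂ] E) - H) := isUnit_of_coercive' _ _ (by positivity) hcoH
  have hRH : ‖Ring.inverse (z • (1 : E →L[ℂ] E) - H)‖ ≤ (μ / 4)⁻¹ :=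
    norm_inverse_le_of_coercive' _ hUH _ (by positivity) hcoH
  -- resolvent identity
  have hSsub : resolventDiff a b z
      = Ring.inverse (z • (1 : E →L[ℂ] E) - H) - Ring.inverse (z • (1 : E →L[ℂ] E) - N) := by
    rw [resolventDiff, ← hN, ← hHdef]
  have habel : (z • (1 : E →L[ℂ] E) - N) - (z • (1 : E →L[ℂ] E) - H) = H - N := by abel
  have hSid : resolventDiff a b z
      = Ring.inverse (z • (1 : E →L[ℂ] E) - H) * (H - N)
        * Ring.inverse (z • (1 : E →L[ℂ] E) - N) := by
    rw [hSsub, ring_inverse_sub_inverse _ _ hUH hUN, habel]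
  have hSnorm : ‖resolventDiff a b z‖
      ≤ ‖Ring.inverse (z • (1 : E →L[ℂ] E) - H)‖ * ‖H - N‖
        * ‖Ring.inverse (z • (1 : E →L[ℂ] E) - N)‖ := by
    rw [hSid]
    exact le_trans (norm_mul_le _ _)
      (mul_le_mul_of_nonneg_right (norm_mul_le _ _) (norm_nonneg _))
  refine ⟨hUb, hUH, hUN, ?_, ?_⟩
  · calc ‖resolventDiff a b z‖
        ≤ ‖Ring.inverse (z • (1 : E →L[ℂ] E) - H)‖ * ‖H - N‖
          * ‖Ring.inverse (z • (1 : E →L[ℂ] E) - N)‖ := hSnorm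
    _ ≤ (μ / 4)⁻¹ * (2 * κ * ‖z‖) * (μ / 2)⁻¹ := by gcongr
    _ = 16 * κ * (μ ^ 2)⁻¹ * ‖z‖ := by field_simp; ring
  · intro hy0
    have hyp : 0 < |y| := abs_pos.mpr hy0
    have hRNy : ‖Ring.inverse (z • (1 : E →L[ℂ] E) - N)‖ ≤ |y|⁻¹ :=
      norm_inverse_le_of_coercive' _ hUN _ hyp hcoNy
    have hRHy : ‖Ring.inverse (z • (1 : E →L[ℂ] E) - H)‖ ≤ 2 * |y|⁻¹ := by
      have h1 : Ring.inverse (z • (1 : E →L[ℂ] E) - H)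
          = Ring.inverse (z • (1 : E →L[ℂ] E) - N) + resolventDiff a b z := by
        rw [hSsub]; abel
      have h4 : ‖Ring.inverse (z • (1 : E →L[ℂ] E) - H)‖
          ≤ ‖Ring.inverse (z • (1 : E →L[ℂ] E) - N)‖ + ‖resolventDiff a b z‖ := by
        rw [h1]; exact norm_add_le _ _
      have h2 : ‖Ring.inverse (z • (1 : E →L[ℂ] E) - H)‖ * ‖H - N‖
          * ‖Ring.inverse (z • (1 : E →L[ℂ] E) - N)‖
          ≤ ‖Ring.inverse (z • (1 : E →L[ℂ] E) - H)‖ * (μ / 4) * (μ / 2)⁻¹ := by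
        gcongr
      have h3 : ‖Ring.inverse (z • (1 : E →L[ℂ] E) - H)‖ * (μ / 4) * (μ / 2)⁻¹
          = ‖Ring.inverse (z • (1 : E →L[ℂ] E) - H)‖ / 2 := by
        field_simp
        ring
      linarith [hSnorm]
    calc ‖resolventDiff a b z‖
        ≤ ‖Ring.inverse (z • (1 : E →L[ℂ] E) - H)‖ * ‖H - N‖
          * ‖Ring.inverse (z • (1 : E →L[ℂ] E) - N)‖ := hSnorm
    _ ≤ (2 * |y|⁻¹) * (2 * κ * ‖z‖) * |y|⁻¹ := by gcongr
    _ = 4 * κ * (|y| ^ 2)⁻¹ * ‖z‖ := by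
        field_simp
        ring
end
end

section
/- Let E and F be nonzero finite-dimensional complex inner product spaces, a : E → F and b : F → F continuous linear maps with b invertible, a† the adjoint of a, κ = ‖a‖²‖b⁻¹‖². Assume N := a† b⁻¹ a is self-adjoint and there is μ > 0 with re⟨v, N v⟩ ≤ −μ‖v‖² for all v ∈ E. Set α = min(‖b⁻¹‖⁻¹/2, μ/(4κ)) and assume μ ≤ α. Assume further there is b_min > 0 such that for every z ∈ ℂ with re z ≥ 0 the map b − z·id is invertible with ‖(b − z·id)⁻¹‖ ≤ b_min⁻¹, that ‖a†b⁻¹a‖ ≤ α/2, and that ‖a†(b − z·id)⁻¹a‖ ≤ α/2 for every z with re z ≥ 0; set β = max(1, 1/(α · b_min · ‖b⁻¹‖²)). Then the function y ↦ (i y)⁻¹ S(i y), where S(z) = (z·id − a†(b − z·id)⁻¹a)⁻¹ − (z·id − N)⁻¹, defined for y ∈ ℝ \ {0}, is Bochner integrable on ℝ, and ‖(1/(2π)) ∫_ℝ (i y)⁻¹ S(i y) dy‖ ≤ (4/π) κ μ⁻¹ (1 + β). -/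
open MeasureTheory
open Set

noncomputable section

section Aux

lemma aux_inv_sub {R : Type*} [Ring R] {x y : R} (hx : IsUnit x) (hy : IsUnit y) :
    Ring.inverse x - Ring.inverse y = Ring.inverse x * (y - x) * Ring.inverse y := by
  obtain ⟨u, rfl⟩ := hx
  obtain ⟨v, rfl⟩ := hy
  rw [Ring.inverse_unit, Ring.inverse_unit]
  rw [mul_sub, sub_mul, mul_assoc (↑u⁻¹ : R) (↑v) (↑v⁻¹), Units.mul_inv, mul_one,
    Units.inv_mul, one_mul]

lemma aux_rpow (t : ℝ) (h0 : 0 < t) : t ^ (-2 : ℝ) = t⁻¹ ^ 2 := by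
  rw [show (-2:ℝ) = -((2:ℕ):ℝ) by norm_num, Real.rpow_neg h0.le, Real.rpow_natCast, inv_pow]

lemma aux_integrable_max (m : ℝ) (hm : 0 < m) :
    IntegrableOn (fun t : ℝ => (max m t)⁻¹ ^ 2) (Ioi 0) := by
  have hsplit : Ioi (0:ℝ) = Ioc 0 m ∪ Ioi m := (Ioc_union_Ioi_eq_Ioi hm.le).symm
  rw [hsplit]
  apply IntegrableOn.union
  · refine Measure.integrableOn_of_bounded (M := m⁻¹ ^ 2) ?_ ?_ ?_
    · simp [Real.volume_Ioc]
    · exact Continuous.aestronglyMeasurable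
        (((continuous_const.max continuous_id).inv₀
          (fun t => ne_of_gt (lt_of_lt_of_le hm (le_max_left _ _)))).pow 2)
    · filter_upwards with t
      have h2 : m ^ 2 ≤ (max m t) ^ 2 := by nlinarith [le_max_left m t]
      rw [Real.norm_eq_abs, abs_of_nonneg (by positivity), inv_pow, inv_pow]
      gcongr
  · have h2 : IntegrableOn (fun t : ℝ => t ^ (-2 : ℝ)) (Ioi m) :=
      integrableOn_Ioi_rpow_of_lt (by norm_num) hm
    apply h2.congr_fun ?_ measurableSet_Ioi
    intro t ht
    have h0 : (0:ℝ) < t := hm.trans ht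
    simp only [aux_rpow t h0, max_eq_right (le_of_lt (mem_Ioi.mp ht))]

lemma aux_integral_max (m : ℝ) (hm : 0 < m) :
    ∫ t in Ioi (0:ℝ), (max m t)⁻¹ ^ 2 = 2 / m := by
  have hsplit : Ioi (0:ℝ) = Ioc 0 m ∪ Ioi m := (Ioc_union_Ioi_eq_Ioi hm.le).symm
  have h1 : IntegrableOn (fun t : ℝ => (max m t)⁻¹ ^ 2) (Ioc 0 m) := by
    have := aux_integrable_max m hm; rw [hsplit] at this; exact this.left_of_union
  have h2 : IntegrableOn (fun t : ℝ => (max m t)⁻¹ ^ 2) (Ioi m) := by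
    have := aux_integrable_max m hm; rw [hsplit] at this; exact this.right_of_union
  rw [hsplit, setIntegral_union (Ioc_disjoint_Ioi le_rfl) measurableSet_Ioi h1 h2]
  have e1 : ∫ t in Ioc (0:ℝ) m, (max m t)⁻¹ ^ 2 = 1 / m := by
    rw [setIntegral_congr_fun measurableSet_Ioc (g := fun _ => m⁻¹ ^ 2)
      (fun t ht => by rw [max_eq_left ht.2])]
    rw [setIntegral_const, Real.volume_real_Ioc_of_le hm.le, smul_eq_mul, sub_zero,
      sq, ← mul_assoc, mul_inv_cancel₀ hm.ne', one_mul, one_div]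
  have e2 : ∫ t in Ioi m, (max m t)⁻¹ ^ 2 = 1 / m := by
    rw [setIntegral_congr_fun measurableSet_Ioi (g := fun t => t ^ (-2:ℝ))
      (fun t ht => by
        have h0 : (0:ℝ) < t := hm.trans ht
        simp only [aux_rpow t h0, max_eq_right (le_of_lt (mem_Ioi.mp ht))])]
    rw [integral_Ioi_rpow_of_lt (by norm_num) hm]
    norm_num [Real.rpow_neg_one]
  rw [e1, e2]; ring

lemma aux_integrable_abs {f : ℝ → ℝ} (hf : IntegrableOn f (Ioi 0)) :
    Integrable (fun x : ℝ => f |x|) := by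
  have hIoi : IntegrableOn (fun x : ℝ => f |x|) (Ioi 0) := by
    apply hf.congr_fun ?_ measurableSet_Ioi
    intro x hx
    simp only [abs_of_pos (show (0:ℝ) < x from hx)]
  have hIic : IntegrableOn (fun x : ℝ => f |x|) (Iic 0) := by
    rw [← Measure.map_neg_eq_self (volume : Measure ℝ)]
    have m : MeasurableEmbedding fun x : ℝ => -x := (Homeomorph.neg ℝ).measurableEmbedding
    rw [m.integrableOn_map_iff]
    simp_rw [Function.comp_def, abs_neg, neg_preimage, neg_Iic, neg_zero]
    exact Iff.mpr integrableOn_Ici_iff_integrableOn_Ioi hIoi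
  have := hIic.union hIoi
  rwa [Iic_union_Ioi, integrableOn_univ] at this

lemma aux_lower_of_inner {E : Type*} [NormedAddCommGroup E] [InnerProductSpace ℂ E]
    (T : E →L[ℂ] E) (m : ℝ) (h : ∀ v : E, m * ‖v‖ ^ 2 ≤ ‖(inner ℂ v (T v) : ℂ)‖) :
    ∀ v : E, m * ‖v‖ ≤ ‖T v‖ := by
  intro v
  rcases eq_or_ne v 0 with rfl | hv
  · simp
  · have hv' : 0 < ‖v‖ := norm_pos_iff.mpr hv
    have h1 := h v
    have h2 : ‖(inner ℂ v (T v) : ℂ)‖ ≤ ‖v‖ * ‖T v‖ := norm_inner_le_norm v (T v)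
    nlinarith

lemma aux_isUnit {E : Type*} [NormedAddCommGroup E] [InnerProductSpace ℂ E]
    [FiniteDimensional ℂ E]
    (T : E →L[ℂ] E) (m : ℝ) (hm : 0 < m) (h : ∀ v, m * ‖v‖ ≤ ‖T v‖) :
    IsUnit T ∧ ‖Ring.inverse T‖ ≤ m⁻¹ := by
  have hinj : Function.Injective T := by
    intro x y hxy
    have h1 : m * ‖x - y‖ ≤ ‖T (x - y)‖ := h _
    rw [map_sub, hxy, sub_self, norm_zero] at h1
    have h2 : ‖x - y‖ ≤ 0 := by nlinarith [norm_nonneg (x - y)]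
    have h3 := le_antisymm h2 (norm_nonneg _)
    rwa [norm_eq_zero, sub_eq_zero] at h3
  have hbij : Function.Bijective T.toLinearMap :=
    ⟨hinj, (LinearMap.injective_iff_surjective (f := T.toLinearMap)).mp hinj⟩
  let e0 : E ≃ₗ[ℂ] E := LinearEquiv.ofBijective T.toLinearMap hbij
  let e : E ≃L[ℂ] E := e0.toContinuousLinearEquiv
  have hcoe : (e : E →L[ℂ] E) = T := by ext v; rfl
  have hu : IsUnit T := by
    refine ⟨(ContinuousLinearEquiv.unitsEquiv ℂ E).symm e, ?_⟩
    rw [← hcoe]; rfl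
  refine ⟨hu, ?_⟩
  obtain ⟨u, hu'⟩ := hu
  rw [← hu', Ring.inverse_unit]
  refine ContinuousLinearMap.opNorm_le_bound _ (by positivity) fun w => ?_
  have h1 : T ((↑u⁻¹ : E →L[ℂ] E) w) = w := by
    have : (T * (↑u⁻¹ : E →L[ℂ] E)) w = w := by rw [← hu', u.mul_inv]; rfl
    simpa [ContinuousLinearMap.mul_apply] using this
  have h2 := h ((↑u⁻¹ : E →L[ℂ] E) w)
  rw [h1] at h2
  rw [inv_mul_eq_div, le_div_iff₀ hm]
  linarith

end Aux

variable {E F : Type*} [NormedAddCommGroup E] [InnerProductSpace ℂ E]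
  [FiniteDimensional ℂ E] [NormedAddCommGroup F] [InnerProductSpace ℂ F]
  [FiniteDimensional ℂ F]

set_option maxHeartbeats 1600000

/-- **Relaxation-time difference bound via the contour integral along the imaginary axis.** -/
theorem relaxation_time_integral_bound
    [Nontrivial E] [Nontrivial F]
    (a : E →L[ℂ] F) (b : F →L[ℂ] F) (hb : IsUnit b)
    (N : E →L[ℂ] E)
    (hN : N = (ContinuousLinearMap.adjoint a).comp ((Ring.inverse b).comp a))
    (hNsa : IsSelfAdjoint N)
    (μ : ℝ) (hμ : 0 < μ)
    (hNneg : ∀ v : E, (inner ℂ v (N v) : ℂ).re ≤ -μ * ‖v‖ ^ 2)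
    (κ α : ℝ) (hκ : κ = ‖a‖ ^ 2 * ‖Ring.inverse b‖ ^ 2)
    (hα : α = min (‖Ring.inverse b‖⁻¹ / 2) (μ / (4 * κ)))
    (hμα : μ ≤ α)
    (bmin : ℝ) (hbmin : 0 < bmin)
    (hres : ∀ z : ℂ, 0 ≤ z.re → IsUnit (b - z • (1 : F →L[ℂ] F)) ∧
      ‖Ring.inverse (b - z • (1 : F →L[ℂ] F))‖ ≤ bmin⁻¹)
    (hNα : ‖(ContinuousLinearMap.adjoint a).comp ((Ring.inverse b).comp a)‖ ≤ α / 2)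
    (hNzα : ∀ z : ℂ, 0 ≤ z.re →
      ‖(ContinuousLinearMap.adjoint a).comp
        ((Ring.inverse (b - z • (1 : F →L[ℂ] F))).comp a)‖ ≤ α / 2)
    (β : ℝ) (hβ : β = max 1 (1 / (α * bmin * ‖Ring.inverse b‖ ^ 2))) :
    Integrable (fun y : ℝ =>
      ((Complex.I * y)⁻¹) • resolventDiff a b (Complex.I * y)) volume ∧
    ‖(1 / (2 * Real.pi)) •
        ∫ y : ℝ, ((Complex.I * y)⁻¹) • resolventDiff a b (Complex.I * y)‖ ≤
      (4 / Real.pi) * κ * μ⁻¹ * (1 + β) := by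
  -- notation
  set r : ℝ := ‖Ring.inverse b‖ with hr_def
  set z : ℝ → ℂ := fun y => Complex.I * y with hz_def
  set Nop : E →L[ℂ] E := (ContinuousLinearMap.adjoint a).comp ((Ring.inverse b).comp a)
    with hNop_def
  set Aop : ℝ → (E →L[ℂ] E) := fun y =>
    (ContinuousLinearMap.adjoint a).comp
      ((Ring.inverse (b - z y • (1 : F →L[ℂ] F))).comp a) with hAop_def
  set X : ℝ → (E →L[ℂ] E) := fun y => z y • (1 : E →L[ℂ] E) - Aop y with hX_def
  set Y : ℝ → (E →L[ℂ] E) := fun y => z y • (1 : E →L[ℂ] E) - Nop with hY_def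
  set f : ℝ → (E →L[ℂ] E) := fun y => ((Complex.I * y)⁻¹) • resolventDiff a b (Complex.I * y)
    with hf_def
  have hfS : ∀ y : ℝ, f y = (z y)⁻¹ • (Ring.inverse (X y) - Ring.inverse (Y y)) := fun y => rfl
  -- basic real facts
  have hzre : ∀ y : ℝ, (z y).re = 0 := by
    intro y; simp [hz_def, Complex.mul_re]
  have hznorm : ∀ y : ℝ, ‖z y‖ = |y| := by
    intro y; simp [hz_def]
  have hrpos : 0 < r := by
    rcases eq_or_lt_of_le (norm_nonneg (Ring.inverse b)) with h | h
    · exfalso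
      have h1 : Ring.inverse b = 0 := by
        rw [← norm_eq_zero]; exact h.symm ▸ rfl
      have h2 : Ring.inverse b * b = 1 := Ring.inverse_mul_cancel b hb
      rw [h1, zero_mul] at h2
      exact one_ne_zero h2.symm
    · exact h
  have hbw : ∀ w : F, ‖w‖ ≤ r * ‖b w‖ := by
    intro w
    have h2 : Ring.inverse b * b = 1 := Ring.inverse_mul_cancel b hb
    have h3 : (Ring.inverse b) (b w) = w := by
      have : (Ring.inverse b * b) w = w := by rw [h2]; rfl
      simpa [ContinuousLinearMap.mul_apply] using this
    calc ‖w‖ = ‖(Ring.inverse b) (b w)‖ := by rw [h3]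
      _ ≤ r * ‖b w‖ := (Ring.inverse b).le_opNorm _
  have hadj : ‖ContinuousLinearMap.adjoint a‖ = ‖a‖ := ContinuousLinearMap.adjoint.norm_map a
  have hNopnorm : ‖Nop‖ ≤ ‖a‖ ^ 2 * r := by
    calc ‖Nop‖ ≤ ‖ContinuousLinearMap.adjoint a‖ * ‖(Ring.inverse b).comp a‖ :=
          ContinuousLinearMap.opNorm_comp_le _ _
      _ ≤ ‖a‖ * (r * ‖a‖) := by
          rw [hadj]
          gcongr
          exact ContinuousLinearMap.opNorm_comp_le _ _
      _ = ‖a‖ ^ 2 * r := by ring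
  -- μ ≤ ‖Nop‖
  have hμNop : μ ≤ ‖Nop‖ := by
    obtain ⟨v, hv⟩ := exists_ne (0 : E)
    have hv' : 0 < ‖v‖ := norm_pos_iff.mpr hv
    have h1 : μ * ‖v‖ ^ 2 ≤ ‖(inner ℂ v (N v) : ℂ)‖ := by
      have h2 := hNneg v
      have h3 : |(inner ℂ v (N v) : ℂ).re| ≤ ‖(inner ℂ v (N v) : ℂ)‖ := by
        exact Complex.abs_re_le_norm _
      have h4 : μ * ‖v‖ ^ 2 ≤ |(inner ℂ v (N v) : ℂ).re| :=
        le_trans (by nlinarith) (neg_le_abs (inner ℂ v (N v) : ℂ).re)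
      linarith
    have h2 : ‖(inner ℂ v (N v) : ℂ)‖ ≤ ‖v‖ * ‖N v‖ := norm_inner_le_norm _ _
    have h3 : ‖N v‖ ≤ ‖N‖ * ‖v‖ := N.le_opNorm v
    have h4 : ‖N‖ = ‖Nop‖ := by rw [hN]
    have h5 : μ * ‖v‖ ^ 2 ≤ ‖Nop‖ * ‖v‖ ^ 2 := by nlinarith
    exact le_of_mul_le_mul_right (by nlinarith) (by positivity : (0:ℝ) < ‖v‖ ^ 2)
  have hapos : 0 < ‖a‖ := by
    by_contra h
    push_neg at h
    have h0 : ‖a‖ = 0 := le_antisymm h (norm_nonneg a)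
    rw [h0] at hNopnorm
    nlinarith
  have hκpos : 0 < κ := by rw [hκ]; positivity
  have hαpos : 0 < α := lt_of_lt_of_le hμ hμα
  have hα2r : α * r ≤ 1 / 2 := by
    have h1 : α ≤ r⁻¹ / 2 := hα ▸ min_le_left _ _
    calc α * r ≤ (r⁻¹ / 2) * r := by gcongr
      _ = 1 / 2 := by field_simp
  have hα4κ : 4 * κ * α ≤ μ := by
    have h1 : α ≤ μ / (4 * κ) := hα ▸ min_le_right _ _
    rw [le_div_iff₀ (by positivity)] at h1
    linarith
  have hκ8 : 8 * κ ≤ 1 := by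
    have h1 : μ ≤ α / 2 := le_trans hμNop hNα
    nlinarith
  have hμr : μ * r ≤ 1 / 2 := by
    calc μ * r ≤ α * r := by gcongr
      _ ≤ 1 / 2 := hα2r
  -- imaginary part of ⟪v, N v⟫ vanishes
  have hNadj : ContinuousLinearMap.adjoint N = N := by
    rw [← ContinuousLinearMap.star_eq_adjoint]; exact hNsa.star_eq
  have hNim : ∀ v : E, (inner ℂ v (N v) : ℂ).im = 0 := by
    intro v
    have h1 : (starRingEnd ℂ) (inner ℂ v (N v) : ℂ) = (inner ℂ v (N v) : ℂ) := by
      rw [inner_conj_symm]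
      rw [← hNadj]
      rw [ContinuousLinearMap.adjoint_inner_left]
      rw [hNadj]
    exact Complex.conj_eq_iff_im.mp h1
  -- inner product of Y
  have hinnerY : ∀ (y : ℝ) (v : E),
      (inner ℂ v ((Y y) v) : ℂ) = z y * ((‖v‖ : ℂ)) ^ 2 - inner ℂ v (N v) := by
    intro y v
    have : (Y y) v = z y • v - N v := by
      simp [hY_def, ContinuousLinearMap.sub_apply, hN]
    rw [this, inner_sub_right, inner_smul_right, inner_self_eq_norm_sq_to_K]
    norm_cast
  have hYlow : ∀ (y : ℝ) (v : E), max μ |y| * ‖v‖ ^ 2 ≤ ‖(inner ℂ v ((Y y) v) : ℂ)‖ := by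
    intro y v
    rw [hinnerY y v]
    set w : ℂ := (inner ℂ v (N v) : ℂ) with hw
    have him : (z y * ((‖v‖ : ℂ)) ^ 2 - w).im = y * ‖v‖ ^ 2 := by
      simp only [Complex.sub_im, Complex.mul_im, Complex.mul_re, Complex.I_re, Complex.I_im,
        Complex.ofReal_re, Complex.ofReal_im, ← Complex.ofReal_pow]
      have hw0 : w.im = 0 := by rw [hw]; exact hNim v
      rw [hw0]
      simp [hz_def]
    have hre : (z y * ((‖v‖ : ℂ)) ^ 2 - w).re = -w.re := by
      simp [hz_def, ← Complex.ofReal_pow, Complex.mul_im, Complex.mul_re, ← hw]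
    have h1 : μ * ‖v‖ ^ 2 ≤ ‖z y * ((‖v‖ : ℂ)) ^ 2 - w‖ := by
      have h2 : |(z y * ((‖v‖ : ℂ)) ^ 2 - w).re| ≤ ‖z y * ((‖v‖ : ℂ)) ^ 2 - w‖ := by
        exact Complex.abs_re_le_norm _
      rw [hre] at h2
      have h3 := hNneg v
      rw [← hw] at h3
      have h4 : μ * ‖v‖ ^ 2 ≤ |(-w.re)| := by
        rw [abs_neg]
        calc μ * ‖v‖ ^ 2 ≤ -w.re := by nlinarith
          _ ≤ |w.re| := neg_le_abs _
      linarith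
    have h5 : |y| * ‖v‖ ^ 2 ≤ ‖z y * ((‖v‖ : ℂ)) ^ 2 - w‖ := by
      have h2 : |(z y * ((‖v‖ : ℂ)) ^ 2 - w).im| ≤ ‖z y * ((‖v‖ : ℂ)) ^ 2 - w‖ := by
        exact Complex.abs_im_le_norm _
      rw [him, abs_mul, abs_of_nonneg (by positivity : (0:ℝ) ≤ ‖v‖ ^ 2)] at h2
      exact h2
    rcases max_cases μ |y| with ⟨hmax, _⟩ | ⟨hmax, _⟩ <;> rw [hmax]
    · exact h1
    · exact h5
  -- Y y is a unit with inverse bound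
  have hYfact : ∀ y : ℝ, IsUnit (Y y) ∧ ‖Ring.inverse (Y y)‖ ≤ (max μ |y|)⁻¹ := by
    intro y
    have hmpos : 0 < max μ |y| := lt_of_lt_of_le hμ (le_max_left _ _)
    exact aux_isUnit (Y y) (max μ |y|) hmpos
      (aux_lower_of_inner (Y y) (max μ |y|) (hYlow y))
  -- resolvent of b at z y : generic facts
  have hbz : ∀ y : ℝ, IsUnit (b - z y • (1 : F →L[ℂ] F)) ∧
      ‖Ring.inverse (b - z y • (1 : F →L[ℂ] F))‖ ≤ bmin⁻¹ := fun y => hres (z y) (le_of_eq (hzre y).symm)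
  -- sharper bound for |y| ≤ α
  have hα2r' : α ≤ (2 * r)⁻¹ := by
    rw [inv_eq_one_div, le_div_iff₀ (by positivity)]
    nlinarith
  have hbz2r : ∀ y : ℝ, |y| ≤ α → ‖Ring.inverse (b - z y • (1 : F →L[ℂ] F))‖ ≤ 2 * r := by
    intro y hy
    have hm : (0:ℝ) < (2 * r)⁻¹ := by positivity
    have hlow : ∀ w : F, (2 * r)⁻¹ * ‖w‖ ≤ ‖(b - z y • (1 : F →L[ℂ] F)) w‖ := by
      intro w
      have h1 : (b - z y • (1 : F →L[ℂ] F)) w = b w - z y • w := by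
        simp [ContinuousLinearMap.sub_apply]
      have h2 : ‖b w‖ - ‖z y • w‖ ≤ ‖b w - z y • w‖ := norm_sub_norm_le _ _
      have h3 : ‖z y • w‖ = |y| * ‖w‖ := by rw [norm_smul, hznorm]
      have h4 : r⁻¹ * ‖w‖ ≤ ‖b w‖ := by
        rw [inv_mul_eq_div, div_le_iff₀ hrpos, mul_comm]
        exact hbw w
      have h5 : |y| * ‖w‖ ≤ (2 * r)⁻¹ * ‖w‖ :=
        mul_le_mul_of_nonneg_right (le_trans hy hα2r') (norm_nonneg w)
      have h6 : r⁻¹ * ‖w‖ - (2 * r)⁻¹ * ‖w‖ = (2 * r)⁻¹ * ‖w‖ := by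
        field_simp
        ring
      rw [h1]
      linarith
    have := (aux_isUnit _ _ hm hlow).2
    rwa [inv_inv] at this
  -- difference Aop y - Nop
  have hdiffeq : ∀ y : ℝ,
      Aop y - Nop = (ContinuousLinearMap.adjoint a).comp
        (((Ring.inverse (b - z y • (1 : F →L[ℂ] F)) * (z y • (1 : F →L[ℂ] F)) *
          Ring.inverse b)).comp a) := by
    intro y
    have h1 : Ring.inverse (b - z y • (1 : F →L[ℂ] F)) - Ring.inverse b =
        Ring.inverse (b - z y • (1 : F →L[ℂ] F)) * (z y • (1 : F →L[ℂ] F)) * Ring.inverse b := by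
      rw [aux_inv_sub (hbz y).1 hb, sub_sub_cancel]
    rw [hAop_def, hNop_def]
    rw [← h1]
    simp only [ContinuousLinearMap.sub_comp, ContinuousLinearMap.comp_sub]
  have hdiffnorm : ∀ y : ℝ, ‖Aop y - Nop‖ ≤
      ‖a‖ ^ 2 * ‖Ring.inverse (b - z y • (1 : F →L[ℂ] F))‖ * |y| * r := by
    intro y
    rw [hdiffeq y]
    have hone : ‖z y • (1 : F →L[ℂ] F)‖ = |y| := by
      rw [norm_smul (z y) (1 : F →L[ℂ] F), hznorm]
      rw [ContinuousLinearMap.one_def, ContinuousLinearMap.norm_id]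
      ring
    set W := Ring.inverse (b - z y • (1 : F →L[ℂ] F)) * (z y • (1 : F →L[ℂ] F)) * Ring.inverse b
      with hW
    have h2 : ‖W‖ ≤ ‖Ring.inverse (b - z y • (1 : F →L[ℂ] F))‖ * |y| * r := by
      calc ‖W‖ ≤ ‖Ring.inverse (b - z y • (1 : F →L[ℂ] F)) * (z y • (1 : F →L[ℂ] F))‖ *
            ‖Ring.inverse b‖ := norm_mul_le _ _
        _ ≤ ‖Ring.inverse (b - z y • (1 : F →L[ℂ] F))‖ * ‖(z y • (1 : F →L[ℂ] F))‖ * r := by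
            gcongr
            exact norm_mul_le _ _
        _ = ‖Ring.inverse (b - z y • (1 : F →L[ℂ] F))‖ * |y| * r := by rw [hone]
    calc ‖(ContinuousLinearMap.adjoint a).comp (W.comp a)‖
        ≤ ‖ContinuousLinearMap.adjoint a‖ * ‖W.comp a‖ := ContinuousLinearMap.opNorm_comp_le _ _
      _ ≤ ‖a‖ * (‖W‖ * ‖a‖) := by
          rw [hadj]; gcongr; exact ContinuousLinearMap.opNorm_comp_le _ _
      _ ≤ ‖a‖ * ((‖Ring.inverse (b - z y • (1 : F →L[ℂ] F))‖ * |y| * r) * ‖a‖) := by gcongr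
      _ = ‖a‖ ^ 2 * ‖Ring.inverse (b - z y • (1 : F →L[ℂ] F))‖ * |y| * r := by ring
  have hANin : ∀ y : ℝ, |y| ≤ α → ‖Aop y - Nop‖ ≤ 2 * κ * |y| := by
    intro y hy
    calc ‖Aop y - Nop‖ ≤ ‖a‖ ^ 2 * ‖Ring.inverse (b - z y • (1 : F →L[ℂ] F))‖ * |y| * r :=
        hdiffnorm y
      _ ≤ ‖a‖ ^ 2 * (2 * r) * |y| * r := by gcongr; exact hbz2r y hy
      _ = 2 * κ * |y| := by rw [hκ]; ring
  have hANout : ∀ y : ℝ, ‖Aop y - Nop‖ ≤ ‖a‖ ^ 2 * bmin⁻¹ * r * |y| := by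
    intro y
    calc ‖Aop y - Nop‖ ≤ ‖a‖ ^ 2 * ‖Ring.inverse (b - z y • (1 : F →L[ℂ] F))‖ * |y| * r :=
        hdiffnorm y
      _ ≤ ‖a‖ ^ 2 * bmin⁻¹ * |y| * r := by gcongr; exact (hbz y).2
      _ = ‖a‖ ^ 2 * bmin⁻¹ * r * |y| := by ring
  -- X y inner case
  have hXY : ∀ y : ℝ, Y y - X y = Aop y - Nop := by
    intro y
    simp only [hX_def, hY_def]
    abel
  have hXin : ∀ y : ℝ, |y| ≤ α →
      IsUnit (X y) ∧ ‖Ring.inverse (X y)‖ ≤ (3 / 4 * max μ |y|)⁻¹ := by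
    intro y hy
    have hM : 0 < max μ |y| := lt_of_lt_of_le hμ (le_max_left _ _)
    have hmpos : 0 < 3 / 4 * max μ |y| := by nlinarith
    apply aux_isUnit _ _ hmpos
    apply aux_lower_of_inner
    intro v
    have hXYv : (X y) v = (Y y) v - (Aop y - Nop) v := by
      have : X y = Y y - (Aop y - Nop) := by
        have h := hXY y
        have : X y = Y y - (Y y - X y) := by abel
        rw [this, h]
      rw [this]
      simp [ContinuousLinearMap.sub_apply]
    have h1 : (inner ℂ v ((X y) v) : ℂ) =
        inner ℂ v ((Y y) v) - inner ℂ v ((Aop y - Nop) v) := by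
      rw [hXYv, inner_sub_right]
    have h2 : ‖(inner ℂ v ((Y y) v) : ℂ)‖ - ‖(inner ℂ v ((Aop y - Nop) v) : ℂ)‖ ≤
        ‖(inner ℂ v ((Y y) v) : ℂ) - (inner ℂ v ((Aop y - Nop) v) : ℂ)‖ := norm_sub_norm_le _ _
    have h3 : ‖(inner ℂ v ((Aop y - Nop) v) : ℂ)‖ ≤ 2 * κ * |y| * ‖v‖ ^ 2 := by
      calc ‖(inner ℂ v ((Aop y - Nop) v) : ℂ)‖ ≤ ‖v‖ * ‖(Aop y - Nop) v‖ :=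
          norm_inner_le_norm _ _
        _ ≤ ‖v‖ * (‖Aop y - Nop‖ * ‖v‖) := by gcongr; exact (Aop y - Nop).le_opNorm v
        _ ≤ ‖v‖ * (2 * κ * |y| * ‖v‖) := by
            gcongr
            exact hANin y hy
        _ = 2 * κ * |y| * ‖v‖ ^ 2 := by ring
    have h4 : 2 * κ * |y| ≤ 1 / 4 * max μ |y| := by
      have h5 := le_max_right μ |y|
      have h6 := abs_nonneg y
      nlinarith
    have h7 := hYlow y v
    rw [h1]
    nlinarith [sq_nonneg ‖v‖]
  -- X y outer case
  have hAopnorm : ∀ y : ℝ, ‖Aop y‖ ≤ α / 2 := by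
    intro y
    have := hNzα (z y) (le_of_eq (hzre y).symm)
    rw [hAop_def]
    exact this
  have hXout : ∀ y : ℝ, α ≤ |y| →
      IsUnit (X y) ∧ ‖Ring.inverse (X y)‖ ≤ (|y| / 2)⁻¹ := by
    intro y hy
    have hy0 : 0 < |y| := lt_of_lt_of_le hαpos hy
    apply aux_isUnit _ _ (by positivity)
    intro v
    have h1 : (X y) v = z y • v - (Aop y) v := by
      simp [hX_def, ContinuousLinearMap.sub_apply]
    have h2 : ‖z y • v‖ = |y| * ‖v‖ := by rw [norm_smul (z y) v, hznorm]
    have h3 : ‖(Aop y) v‖ ≤ α / 2 * ‖v‖ :=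
      le_trans ((Aop y).le_opNorm v) (by gcongr; exact hAopnorm y)
    have h4 : ‖z y • v‖ - ‖(Aop y) v‖ ≤ ‖z y • v - (Aop y) v‖ := norm_sub_norm_le _ _
    rw [h1]
    have h5 := norm_nonneg v
    nlinarith
  have hXunit : ∀ y : ℝ, IsUnit (X y) := by
    intro y
    rcases le_total |y| α with h | h
    · exact (hXin y h).1
    · exact (hXout y h).1
  -- pointwise bound
  set c : ℝ := ‖a‖ ^ 2 * bmin⁻¹ * r with hc_def
  have hcpos : 0 < c := by rw [hc_def]; positivity
  set G : ℝ → ℝ := fun y => 8 * κ / 3 * ((max μ |y|)⁻¹ ^ 2) + 2 * c * ((max α |y|)⁻¹ ^ 2)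
    with hG_def
  have hGnonneg : ∀ y : ℝ, 0 ≤ G y := by
    intro y
    rw [hG_def]
    positivity
  have hpt : ∀ y : ℝ, ‖f y‖ ≤ G y := by
    intro y
    rcases eq_or_ne y 0 with rfl | hy0
    · have hf0 : f 0 = 0 := by
        rw [hfS 0]
        simp [hz_def]
      rw [hf0, norm_zero]
      exact hGnonneg 0
    have hyabs : 0 < |y| := abs_pos.mpr hy0
    have hM : 0 < max μ |y| := lt_of_lt_of_le hμ (le_max_left _ _)
    have hS : Ring.inverse (X y) - Ring.inverse (Y y) =
        Ring.inverse (X y) * (Aop y - Nop) * Ring.inverse (Y y) := by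
      rw [aux_inv_sub (hXunit y) (hYfact y).1, hXY y]
    have hnormf : ‖f y‖ = |y|⁻¹ * ‖Ring.inverse (X y) - Ring.inverse (Y y)‖ := by
      rw [hfS y, norm_smul ((z y)⁻¹) (Ring.inverse (X y) - Ring.inverse (Y y)),
        norm_inv, hznorm]
    rcases le_total |y| α with hcase | hcase
    · -- inner region
      have h1 : ‖Ring.inverse (X y) - Ring.inverse (Y y)‖ ≤
          (3 / 4 * max μ |y|)⁻¹ * (2 * κ * |y|) * (max μ |y|)⁻¹ := by
        rw [hS]
        calc ‖Ring.inverse (X y) * (Aop y - Nop) * Ring.inverse (Y y)‖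
            ≤ ‖Ring.inverse (X y) * (Aop y - Nop)‖ * ‖Ring.inverse (Y y)‖ := norm_mul_le _ _
          _ ≤ ‖Ring.inverse (X y)‖ * ‖Aop y - Nop‖ * ‖Ring.inverse (Y y)‖ := by
              gcongr
              exact norm_mul_le _ _
          _ ≤ (3 / 4 * max μ |y|)⁻¹ * (2 * κ * |y|) * (max μ |y|)⁻¹ := by
              gcongr
              · exact (hXin y hcase).2
              · exact hANin y hcase
              · exact (hYfact y).2
      have h2 : |y|⁻¹ * ((3 / 4 * max μ |y|)⁻¹ * (2 * κ * |y|) * (max μ |y|)⁻¹) =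
          8 * κ / 3 * ((max μ |y|)⁻¹ ^ 2) := by
        field_simp
        ring
      calc ‖f y‖ = |y|⁻¹ * ‖Ring.inverse (X y) - Ring.inverse (Y y)‖ := hnormf
        _ ≤ |y|⁻¹ * ((3 / 4 * max μ |y|)⁻¹ * (2 * κ * |y|) * (max μ |y|)⁻¹) := by
            gcongr
        _ = 8 * κ / 3 * ((max μ |y|)⁻¹ ^ 2) := h2
        _ ≤ G y := by
            rw [hG_def]
            have : (0:ℝ) ≤ 2 * c * ((max α |y|)⁻¹ ^ 2) := by positivity
            linarith
    · -- outer region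
      have hmax : max α |y| = |y| := max_eq_right hcase
      have h1 : ‖Ring.inverse (X y) - Ring.inverse (Y y)‖ ≤
          (|y| / 2)⁻¹ * (c * |y|) * |y|⁻¹ := by
        rw [hS]
        have hYb : ‖Ring.inverse (Y y)‖ ≤ |y|⁻¹ :=
          le_trans (hYfact y).2 (inv_anti₀ hyabs (le_max_right _ _))
        calc ‖Ring.inverse (X y) * (Aop y - Nop) * Ring.inverse (Y y)‖
            ≤ ‖Ring.inverse (X y) * (Aop y - Nop)‖ * ‖Ring.inverse (Y y)‖ := norm_mul_le _ _
          _ ≤ ‖Ring.inverse (X y)‖ * ‖Aop y - Nop‖ * ‖Ring.inverse (Y y)‖ := by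
              gcongr
              exact norm_mul_le _ _
          _ ≤ (|y| / 2)⁻¹ * (c * |y|) * |y|⁻¹ := by
              gcongr
              · exact (hXout y hcase).2
              · calc ‖Aop y - Nop‖ ≤ ‖a‖ ^ 2 * bmin⁻¹ * r * |y| := hANout y
                  _ = c * |y| := by rw [hc_def]
      have h2 : |y|⁻¹ * ((|y| / 2)⁻¹ * (c * |y|) * |y|⁻¹) = 2 * c * ((|y|)⁻¹ ^ 2) := by
        field_simp
      calc ‖f y‖ = |y|⁻¹ * ‖Ring.inverse (X y) - Ring.inverse (Y y)‖ := hnormf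
        _ ≤ |y|⁻¹ * ((|y| / 2)⁻¹ * (c * |y|) * |y|⁻¹) := by gcongr
        _ = 2 * c * ((|y|)⁻¹ ^ 2) := h2
        _ ≤ G y := by
            have hGy : G y = 8 * κ / 3 * ((max μ |y|)⁻¹ ^ 2) + 2 * c * ((max α |y|)⁻¹ ^ 2) := rfl
            rw [hGy, hmax]
            have : (0:ℝ) ≤ 8 * κ / 3 * ((max μ |y|)⁻¹ ^ 2) := by positivity
            linarith
  -- integrability of the dominating function
  have hIμ : IntegrableOn (fun t : ℝ => 8 * κ / 3 * ((max μ t)⁻¹ ^ 2)) (Ioi 0) :=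
    (aux_integrable_max μ hμ).const_mul _
  have hIα : IntegrableOn (fun t : ℝ => 2 * c * ((max α t)⁻¹ ^ 2)) (Ioi 0) :=
    (aux_integrable_max α hαpos).const_mul _
  have hGint : Integrable G := by
    have h2 := aux_integrable_abs (hIμ.add hIα)
    exact h2
  -- continuity of f away from 0
  have hzc : Continuous z := continuous_const.mul Complex.continuous_ofReal
  have hc1 : Continuous fun y : ℝ => Ring.inverse (b - z y • (1 : F →L[ℂ] F)) := by
    rw [continuous_iff_continuousAt]
    intro y0
    obtain ⟨u, hu⟩ := (hbz y0).1
    have hinner : Continuous fun y : ℝ => b - z y • (1 : F →L[ℂ] F) :=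
      continuous_const.sub (hzc.smul continuous_const)
    have hCA : ContinuousAt Ring.inverse (b - z y0 • (1 : F →L[ℂ] F)) := by
      rw [← hu]
      exact NormedRing.inverse_continuousAt u
    exact ContinuousAt.comp (g := Ring.inverse)
      (f := fun y : ℝ => b - z y • (1 : F →L[ℂ] F)) (x := y0) hCA hinner.continuousAt
  have hAc : Continuous Aop := continuous_const.clm_comp (hc1.clm_comp continuous_const)
  have hXc : Continuous X := (hzc.smul continuous_const).sub hAc
  have hYc : Continuous Y := (hzc.smul continuous_const).sub continuous_const
  have hRXc : Continuous fun y : ℝ => Ring.inverse (X y) := by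
    rw [continuous_iff_continuousAt]
    intro y0
    obtain ⟨u, hu⟩ := hXunit y0
    have hCA : ContinuousAt Ring.inverse (X y0) := by
      rw [← hu]
      exact NormedRing.inverse_continuousAt u
    exact ContinuousAt.comp (g := Ring.inverse) (f := X) (x := y0) hCA hXc.continuousAt
  have hRYc : Continuous fun y : ℝ => Ring.inverse (Y y) := by
    rw [continuous_iff_continuousAt]
    intro y0
    obtain ⟨u, hu⟩ := (hYfact y0).1
    have hCA : ContinuousAt Ring.inverse (Y y0) := by
      rw [← hu]
      exact NormedRing.inverse_continuousAt u
    exact ContinuousAt.comp (g := Ring.inverse) (f := Y) (x := y0) hCA hYc.continuousAt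
  have hfeq : f = fun y : ℝ => (z y)⁻¹ • (Ring.inverse (X y) - Ring.inverse (Y y)) :=
    funext hfS
  have hfcont : ContinuousOn f ({(0:ℝ)}ᶜ) := by
    rw [hfeq]
    apply ContinuousOn.fun_smul
    · apply ContinuousOn.inv₀ hzc.continuousOn
      intro x hx
      have hx0 : x ≠ 0 := hx
      exact mul_ne_zero Complex.I_ne_zero (Complex.ofReal_ne_zero.mpr hx0)
    · exact (hRXc.sub hRYc).continuousOn
  have hmeas : AEStronglyMeasurable f volume := by
    have h1 : AEStronglyMeasurable f (volume.restrict ({(0:ℝ)}ᶜ)) :=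
      hfcont.aestronglyMeasurable (measurableSet_singleton 0).compl
    have h2 : volume.restrict ({(0:ℝ)}ᶜ) = volume := by
      rw [Measure.restrict_congr_set (t := univ) ?_, Measure.restrict_univ]
      rw [ae_eq_univ]
      simp
    rwa [h2] at h1
  have hfint : Integrable f := hGint.mono' hmeas (Filter.Eventually.of_forall hpt)
  refine ⟨hfint, ?_⟩
  -- the integral bound
  have hnormint : ‖∫ y : ℝ, f y‖ ≤ ∫ y : ℝ, G y :=
    norm_integral_le_of_norm_le hGint (Filter.Eventually.of_forall hpt)
  have h4 : ∫ t in Ioi (0:ℝ),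
      (8 * κ / 3 * ((max μ t)⁻¹ ^ 2) + 2 * c * ((max α t)⁻¹ ^ 2)) =
      8 * κ / 3 * (2 / μ) + 2 * c * (2 / α) := by
    rw [integral_add hIμ hIα, MeasureTheory.integral_const_mul, MeasureTheory.integral_const_mul,
      aux_integral_max μ hμ, aux_integral_max α hαpos]
  have hGval : ∫ y : ℝ, G y = 2 * (8 * κ / 3 * (2 / μ) + 2 * c * (2 / α)) := by
    have h3 := integral_comp_abs
      (f := fun t => 8 * κ / 3 * ((max μ t)⁻¹ ^ 2) + 2 * c * ((max α t)⁻¹ ^ 2))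
    rw [h4] at h3
    exact h3
  -- β facts and the final numeric inequality
  have hβ1 : 1 ≤ β := hβ ▸ le_max_left _ _
  have hβ2 : 1 / (α * bmin * r ^ 2) ≤ β := hβ ▸ le_max_right _ _
  have hcκ : c * bmin * r = κ := by
    rw [hc_def, hκ]
    field_simp
  have key : 16 * κ / (3 * μ) + 4 * c / α ≤ 4 * κ / μ * (1 + β) := by
    have hb2' : 1 ≤ β * (α * bmin * r ^ 2) := by
      rw [div_le_iff₀ (by positivity)] at hβ2
      linarith
    have e1 : 4 * c / α ≤ 2 * κ * β / μ := by
      rw [div_le_div_iff₀ hαpos hμ]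
      have h6 : 2 * c ≤ 2 * c * (β * (α * bmin * r ^ 2)) := by nlinarith
      have h7 : 2 * c * (β * (α * bmin * r ^ 2)) = 2 * κ * β * α * r := by
        rw [← hcκ]; ring
      have h8 : 4 * c * μ * r ≤ 2 * c := by nlinarith
      have h9 : 4 * c * μ * r ≤ 2 * κ * β * α * r := by linarith
      have h10 : 4 * c * μ ≤ 2 * κ * β * α := by
        have := (mul_le_mul_iff_of_pos_right hrpos).mp h9
        linarith
      linarith
    have e2 : 16 * κ / (3 * μ) ≤ 4 * κ / μ + 2 * κ / μ := by
      rw [← add_div, div_le_div_iff₀ (by positivity) hμ]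
      nlinarith
    have e3 : 2 * κ / μ ≤ 2 * κ * β / μ := by
      rw [div_le_div_iff₀ hμ hμ]
      nlinarith [mul_nonneg (mul_nonneg (by linarith : (0:ℝ) ≤ 2 * κ) hμ.le)
        (by linarith : (0:ℝ) ≤ β - 1)]
    have expand : 4 * κ / μ * (1 + β) = 4 * κ / μ + 2 * κ * β / μ + 2 * κ * β / μ := by
      ring
    linarith
  have hπ : (0:ℝ) < Real.pi := Real.pi_pos
  calc ‖(1 / (2 * Real.pi)) • ∫ y : ℝ, f y‖
      = (1 / (2 * Real.pi)) * ‖∫ y : ℝ, f y‖ := by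
        rw [norm_smul ((1:ℝ) / (2 * Real.pi)) (∫ y : ℝ, f y), Real.norm_eq_abs,
          abs_of_pos (by positivity)]
    _ ≤ (1 / (2 * Real.pi)) * ∫ y : ℝ, G y := by gcongr
    _ = (1 / (2 * Real.pi)) * (2 * (8 * κ / 3 * (2 / μ) + 2 * c * (2 / α))) := by rw [hGval]
    _ = (1 / Real.pi) * (16 * κ / (3 * μ) + 4 * c / α) := by
        field_simp
        try ring
    _ ≤ (1 / Real.pi) * (4 * κ / μ * (1 + β)) := by gcongr
    _ = 4 / Real.pi * κ * μ⁻¹ * (1 + β) := by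
        field_simp
        try ring
end
end

section
/- Let E and F be nonzero finite-dimensional complex inner product spaces, let a : E → F be linear with adjoint a†, let b : F → F be linear and invertible, and let ν : F → F be linear with ‖ν‖ ≤ (1/2)‖b⁻¹‖⁻¹ (so b − ν is invertible). Set κ = ‖a‖²‖b⁻¹‖², let N := a†b⁻¹a and N₀ := a†(b − ν)⁻¹a, and assume both N and N₀ are self-adjoint and that there is μ > 0 with re⟨v, N v⟩ ≤ −μ‖v‖² and re⟨v, N₀ v⟩ ≤ −μ‖v‖² for all v ∈ E, and that 8κ‖ν‖ ≤ μ. Then for every t ≥ 0, ‖exp(t N) − exp(t N₀)‖ ≤ 32 · e^{−μt/2} · μ⁻¹ κ ‖ν‖. -/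
open NormedSpace ContinuousLinearMap

local notation "⟪" x ", " y "⟫" => @inner ℂ _ _ x y

lemma exp_real_eq_complex {E : Type*} [NormedAddCommGroup E] [InnerProductSpace ℂ E]
    [FiniteDimensional ℂ E] (M : E →L[ℂ] E) (u : ℝ) :
    exp (u • M) = exp (u • M) := by
  rfl

/-- Semigroup decay bound: if `re⟪v, N v⟫ ≤ -μ‖v‖²` then `‖exp(s•N)‖ ≤ e^{-μ s}` for `s ≥ 0`. -/
lemma exp_opNorm_le_of_quadform {E : Type*} [NormedAddCommGroup E] [InnerProductSpace ℂ E]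
    [FiniteDimensional ℂ E] (N : E →L[ℂ] E) (μ : ℝ)
    (hNneg : ∀ v : E, (inner ℂ v (N v) : ℂ).re ≤ -μ * ‖v‖ ^ 2)
    (s : ℝ) (hs : 0 ≤ s) : ‖exp (s • N)‖ ≤ Real.exp (-μ * s) := by
  have hre : ∀ u : ℝ, exp (u • N) = exp (u • N) := fun u => exp_real_eq_complex N u
  apply ContinuousLinearMap.opNorm_le_bound _ (Real.exp_nonneg _)
  intro v
  set f : ℝ → E := fun u => exp (u • N) v with hf
  have hderiv : ∀ u : ℝ, HasDerivAt f (N (f u)) u := by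
    intro u
    have h1 : HasDerivAt (fun w : ℝ => exp (w • N)) (N * exp (u • N)) u :=
      hasDerivAt_exp_smul_const' N u
    have h2 := ((ContinuousLinearMap.apply ℂ E v).restrictScalars ℝ).hasFDerivAt.comp_hasDerivAt
      u h1
    exact h2
  set G : ℝ → ℝ := fun u => Real.exp (2 * μ * u) * (⟪f u, f u⟫).re with hG
  have hGderiv : ∀ u : ℝ, HasDerivAt G
      (2 * μ * Real.exp (2 * μ * u) * (⟪f u, f u⟫).re
        + Real.exp (2 * μ * u) * (⟪f u, N (f u)⟫ + ⟪N (f u), f u⟫).re) u := by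
    intro u
    have hexp : HasDerivAt (fun w : ℝ => Real.exp (2 * μ * w))
        (2 * μ * Real.exp (2 * μ * u)) u := by
      simpa [mul_comm] using ((hasDerivAt_id u).const_mul (2 * μ)).exp
    have hinn : HasDerivAt (fun w => ⟪f w, f w⟫) (⟪f u, N (f u)⟫ + ⟪N (f u), f u⟫) u :=
      (hderiv u).inner ℂ (hderiv u)
    have hinnre : HasDerivAt (fun w => (⟪f w, f w⟫).re)
        ((⟪f u, N (f u)⟫ + ⟪N (f u), f u⟫).re) u :=
      (Complex.reCLM.hasFDerivAt.comp_hasDerivAt u hinn)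
    exact hexp.mul hinnre
  have hGanti : Antitone G := by
    apply antitone_of_hasDerivAt_nonpos hGderiv
    intro u
    have h1 : (⟪f u, N (f u)⟫).re ≤ -μ * ‖f u‖ ^ 2 := hNneg (f u)
    have h2 : (⟪N (f u), f u⟫).re = (⟪f u, N (f u)⟫).re := by
      simpa using inner_re_symm (𝕜 := ℂ) (N (f u)) (f u)
    have h3 : (⟪f u, f u⟫).re = ‖f u‖ ^ 2 := by
      simpa using inner_self_eq_norm_sq (𝕜 := ℂ) (f u)
    have hep : 0 < Real.exp (2 * μ * u) := Real.exp_pos _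
    show 2 * μ * Real.exp (2 * μ * u) * (⟪f u, f u⟫).re
        + Real.exp (2 * μ * u) * (⟪f u, N (f u)⟫ + ⟪N (f u), f u⟫).re ≤ 0
    have h4 : (⟪f u, N (f u)⟫ + ⟪N (f u), f u⟫).re ≤ -(2 * μ) * ‖f u‖ ^ 2 := by
      rw [Complex.add_re, h2]; linarith
    rw [h3]
    nlinarith [sq_nonneg (‖f u‖), mul_le_mul_of_nonneg_left h4 hep.le]
  have hGs : G s ≤ G 0 := hGanti hs
  have h0 : G 0 = ‖v‖ ^ 2 := by
    have h5 : (⟪f 0, f 0⟫).re = ‖f 0‖ ^ 2 := by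
      simpa using inner_self_eq_norm_sq (𝕜 := ℂ) (f 0)
    have h6 : f 0 = v := by rw [hf]; simp [NormedSpace.exp_zero]
    have h7 : (⟪v, v⟫).re = ‖v‖ ^ 2 := by simpa using inner_self_eq_norm_sq (𝕜 := ℂ) v
    simp [hG, h5, h6, h7]
    rw [← Complex.ofReal_pow, Complex.ofReal_re]
  have hfs : (⟪f s, f s⟫).re = ‖f s‖ ^ 2 := by
    simpa using inner_self_eq_norm_sq (𝕜 := ℂ) (f s)
  have key : Real.exp (2 * μ * s) * ‖f s‖ ^ 2 ≤ ‖v‖ ^ 2 := by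
    rw [← hfs, ← h0]; exact hGs
  have hfsv : ‖f s‖ ≤ Real.exp (-μ * s) * ‖v‖ := by
    have h2 : ‖f s‖ ^ 2 ≤ (Real.exp (-μ * s) * ‖v‖) ^ 2 := by
      have hee : Real.exp (-μ * s) ^ 2 = Real.exp (-(2 * μ * s)) := by
        rw [sq, ← Real.exp_add]; ring_nf
      calc ‖f s‖ ^ 2 = Real.exp (-(2 * μ * s)) * (Real.exp (2 * μ * s) * ‖f s‖ ^ 2) := by
            rw [← mul_assoc, ← Real.exp_add]; simp
        _ ≤ Real.exp (-(2 * μ * s)) * ‖v‖ ^ 2 := by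
            exact mul_le_mul_of_nonneg_left key (Real.exp_nonneg _)
        _ = (Real.exp (-μ * s) * ‖v‖) ^ 2 := by rw [mul_pow, hee]
    exact (pow_le_pow_iff_left₀ (norm_nonneg _) (by positivity) two_ne_zero).mp h2
  calc ‖exp (s • N) v‖ = ‖f s‖ := by rw [hf]
    _ ≤ Real.exp (-μ * s) * ‖v‖ := hfsv

set_option maxHeartbeats 2000000 in
/-- **Evolution difference between the kinetic networks `N` and `N₀`.**
With `b = b₀ + ν`, `N = a†b⁻¹a` and `N₀ = a†(b−ν)⁻¹a`, both self-adjoint and bounded above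
by `−μ` on the quadratic form, and `8κ‖ν‖ ≤ μ` where `κ = ‖a‖²‖b⁻¹‖²`, then for all `t ≥ 0`,
`‖exp(t N) − exp(t N₀)‖ ≤ 32·e^{−μt/2}·μ⁻¹κ‖ν‖`. -/
theorem kinetic_networks_evolution_difference_bound
    (E F : Type*) [NormedAddCommGroup E] [InnerProductSpace ℂ E]
    [FiniteDimensional ℂ E] [Nontrivial E]
    [NormedAddCommGroup F] [InnerProductSpace ℂ F]
    [FiniteDimensional ℂ F] [Nontrivial F]
    (a : E →L[ℂ] F) (b ν : F →L[ℂ] F) (hb : IsUnit b)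
    (hν : ‖ν‖ ≤ (1 / 2) * ‖Ring.inverse b‖⁻¹)
    (hbν : IsUnit (b - ν))
    (κ : ℝ) (hκ : κ = ‖a‖ ^ 2 * ‖Ring.inverse b‖ ^ 2)
    (N N₀ : E →L[ℂ] E)
    (hN : N = (ContinuousLinearMap.adjoint a).comp ((Ring.inverse b).comp a))
    (hN₀ : N₀ = (ContinuousLinearMap.adjoint a).comp ((Ring.inverse (b - ν)).comp a))
    (hNsa : IsSelfAdjoint N) (hN₀sa : IsSelfAdjoint N₀)
    (μ : ℝ) (hμ : 0 < μ)
    (hNneg : ∀ v : E, (inner ℂ v (N v) : ℂ).re ≤ -μ * ‖v‖ ^ 2)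
    (hN₀neg : ∀ v : E, (inner ℂ v (N₀ v) : ℂ).re ≤ -μ * ‖v‖ ^ 2)
    (hκν : 8 * κ * ‖ν‖ ≤ μ)
    (t : ℝ) (ht : 0 ≤ t) :
    ‖NormedSpace.exp (t • N) - NormedSpace.exp (t • N₀)‖ ≤
      32 * Real.exp (-μ * t / 2) * μ⁻¹ * κ * ‖ν‖ := by
  set B := Ring.inverse b with hB
  set C := Ring.inverse (b - ν) with hC
  have hBb : B * b = 1 := Ring.inverse_mul_cancel b hb
  have hbνC : (b - ν) * C = 1 := Ring.mul_inverse_cancel _ hbν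
  have hνB : ‖ν‖ * ‖B‖ ≤ 1 / 2 := by
    rcases eq_or_ne ‖B‖ 0 with h | h
    · rw [h]; norm_num
    · have := mul_le_mul_of_nonneg_right hν (norm_nonneg B)
      rwa [mul_assoc, inv_mul_cancel₀ h, mul_one] at this
  have hbC : b * C = 1 + ν * C := by
    have h := hbνC
    rw [sub_mul] at h
    exact eq_add_of_sub_eq h
  have hCeq : C = B + B * (ν * C) := by
    calc C = B * (b * C) := by rw [← mul_assoc, hBb, one_mul]
      _ = B * (1 + ν * C) := by rw [hbC]
      _ = B + B * (ν * C) := by rw [mul_add, mul_one]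
  have hCle : ‖C‖ ≤ 2 * ‖B‖ := by
    have h1 : ‖C‖ ≤ ‖B‖ + ‖B‖ * (‖ν‖ * ‖C‖) := by
      calc ‖C‖ = ‖B + B * (ν * C)‖ := by rw [← hCeq]
        _ ≤ ‖B‖ + ‖B * (ν * C)‖ := norm_add_le _ _
        _ ≤ ‖B‖ + ‖B‖ * (‖ν‖ * ‖C‖) := by
            have g1 := norm_mul_le B (ν * C)
            have g2 := norm_mul_le ν C
            nlinarith [norm_nonneg B, norm_nonneg ν, norm_nonneg C]
    nlinarith [norm_nonneg C, norm_nonneg B, norm_nonneg ν, hνB]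
  have hBC : B - C = -(B * (ν * C)) := by
    have h1 : B = C - B * (ν * C) := by
      calc B = B * ((b - ν) * C) := by rw [hbνC, mul_one]
        _ = B * (b * C) - B * (ν * C) := by rw [sub_mul, mul_sub]
        _ = C - B * (ν * C) := by rw [← mul_assoc, hBb, one_mul]
    nth_rewrite 1 [h1]
    rw [sub_sub_cancel_left]
  have hκ0 : 0 ≤ κ := by rw [hκ]; positivity
  have hdiff : ‖N - N₀‖ ≤ 2 * κ * ‖ν‖ := by
    have hNd : N - N₀ = (ContinuousLinearMap.adjoint a).comp ((B - C).comp a) := by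
      rw [hN, hN₀]; ext v; simp
    have hadj : ‖ContinuousLinearMap.adjoint a‖ = ‖a‖ :=
      ContinuousLinearMap.adjoint.norm_map a
    have hBCnorm : ‖B - C‖ ≤ 2 * ‖B‖ ^ 2 * ‖ν‖ := by
      rw [hBC, norm_neg]
      calc ‖B * (ν * C)‖ ≤ ‖B‖ * (‖ν‖ * ‖C‖) := by
            have g1 := norm_mul_le B (ν * C)
            have g2 := norm_mul_le ν C
            nlinarith [norm_nonneg B, norm_nonneg ν, norm_nonneg C]
        _ ≤ 2 * ‖B‖ ^ 2 * ‖ν‖ := by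
            nlinarith [norm_nonneg B, norm_nonneg ν, hCle,
              mul_le_mul_of_nonneg_left hCle (mul_nonneg (norm_nonneg B) (norm_nonneg ν))]
    calc ‖N - N₀‖ ≤ ‖ContinuousLinearMap.adjoint a‖ * ‖(B - C).comp a‖ := by
          rw [hNd]; exact ContinuousLinearMap.opNorm_comp_le _ _
      _ ≤ ‖a‖ * (‖B - C‖ * ‖a‖) := by
          rw [hadj]
          exact mul_le_mul_of_nonneg_left (ContinuousLinearMap.opNorm_comp_le _ _)
            (norm_nonneg a)
      _ ≤ ‖a‖ * ((2 * ‖B‖ ^ 2 * ‖ν‖) * ‖a‖) := by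
          have := mul_le_mul_of_nonneg_right hBCnorm (norm_nonneg a)
          exact mul_le_mul_of_nonneg_left this (norm_nonneg a)
      _ = 2 * κ * ‖ν‖ := by rw [hκ]; ring
  -- Duhamel / mean value: ‖exp(tN) - exp(tN₀)‖ ≤ t e^{-μt} ‖N - N₀‖
  set δ := ‖N - N₀‖ with hδ
  have hδ0 : 0 ≤ δ := norm_nonneg _
  have hMVT : ‖exp (t • N) - exp (t • N₀)‖ ≤ Real.exp (-μ * t) * δ * t := by
    set φ : ℝ → (E →L[ℂ] E) := fun s => exp ((t - s) • N) * exp (s • N₀) with hφ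
    set φ' : ℝ → (E →L[ℂ] E) := fun s =>
      exp ((t - s) • N) * ((N₀ - N) * exp (s • N₀)) with hφ'
    have hre : ∀ (M : E →L[ℂ] E) (u : ℝ), exp (u • M) = exp (u • M) :=
      fun M u => exp_real_eq_complex M u
    have hder : ∀ s : ℝ, HasDerivAt φ (φ' s) s := by
      intro s
      have h1 : HasDerivAt (fun w : ℝ => exp (w • N)) (N * exp ((t - s) • N)) (t - s) :=
        hasDerivAt_exp_smul_const' N (t - s)
      have h1' : HasDerivAt (fun w : ℝ => exp ((t - w) • N))
          ((-1 : ℝ) • (N * exp ((t - s) • N))) s := by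
        have hts : HasDerivAt (fun w : ℝ => t - w) (-1 : ℝ) s := by
          simpa using (hasDerivAt_id s).const_sub t
        exact h1.scomp s hts
      have h2 : HasDerivAt (fun w : ℝ => exp (w • N₀)) (N₀ * exp (s • N₀)) s :=
        hasDerivAt_exp_smul_const' N₀ s
      have h3 := h1'.mul h2
      have heq : (-1 : ℝ) • (N * exp ((t - s) • N)) * exp (s • N₀)
          + exp ((t - s) • N) * (N₀ * exp (s • N₀)) = φ' s := by
        simp only [hφ', hre, neg_one_smul]
        have hcomm : exp ((t - s) • N) * N = N * exp ((t - s) • N) :=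
          (((Commute.refl N).smul_left ((t - s) : ℝ)).exp_left).eq
        rw [sub_mul, mul_sub, neg_mul, ← hcomm, mul_assoc]
        abel
      rw [← heq]
      have : φ = fun w : ℝ => exp ((t - w) • N) * exp (w • N₀) := by
        funext w; rw [hφ]
      rw [this]
      exact h3
    have hbound : ∀ s ∈ Set.Icc (0 : ℝ) t, ‖φ' s‖ ≤ Real.exp (-μ * t) * δ := by
      intro s hs
      obtain ⟨hs0, hst⟩ := hs
      have e1 : ‖exp ((t - s) • N)‖ ≤ Real.exp (-μ * (t - s)) :=
        exp_opNorm_le_of_quadform N μ hNneg (t - s) (by linarith)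
      have e2 : ‖exp (s • N₀)‖ ≤ Real.exp (-μ * s) :=
        exp_opNorm_le_of_quadform N₀ μ hN₀neg s hs0
      have e3 : ‖N₀ - N‖ = δ := by rw [hδ, norm_sub_rev]
      calc ‖φ' s‖ ≤ ‖exp ((t - s) • N)‖ * (‖N₀ - N‖ * ‖exp (s • N₀)‖) := by
            have g1 := norm_mul_le (exp ((t - s) • N)) ((N₀ - N) * exp (s • N₀))
            have g2 := norm_mul_le (N₀ - N) (exp (s • N₀))
            nlinarith [norm_nonneg (exp ((t - s) • N)), norm_nonneg (N₀ - N),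
              norm_nonneg (exp (s • N₀))]
        _ ≤ Real.exp (-μ * (t - s)) * (δ * Real.exp (-μ * s)) := by
            rw [e3]
            have := mul_le_mul_of_nonneg_left e2 hδ0
            have h4 : ‖N₀ - N‖ * ‖exp (s • N₀)‖ ≤ δ * Real.exp (-μ * s) := by
              rw [e3]; exact mul_le_mul_of_nonneg_left e2 hδ0
            exact mul_le_mul e1 (e3 ▸ h4) (by positivity) (Real.exp_nonneg _)
        _ = Real.exp (-μ * (t - s)) * Real.exp (-μ * s) * δ := by ring
        _ = Real.exp (-μ * (t - s) + -μ * s) * δ := by rw [← Real.exp_add]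
        _ = Real.exp (-μ * t) * δ := by rw [show -μ * (t - s) + -μ * s = -μ * t by ring]
    have hmvt := Convex.norm_image_sub_le_of_norm_hasDerivWithin_le
      (f := φ) (f' := φ') (s := Set.Icc (0 : ℝ) t) (C := Real.exp (-μ * t) * δ)
      (fun s hs => (hder s).hasDerivWithinAt) hbound (convex_Icc 0 t)
      (Set.left_mem_Icc.mpr ht) (Set.right_mem_Icc.mpr ht)
    have hφt : φ t = exp (t • N₀) := by
      rw [hφ]; simp [NormedSpace.exp_zero]
    have hφ0 : φ 0 = exp (t • N) := by
      rw [hφ]; simp [NormedSpace.exp_zero]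
    rw [hφt, hφ0] at hmvt
    calc ‖exp (t • N) - exp (t • N₀)‖ = ‖exp (t • N₀) - exp (t • N)‖ := norm_sub_rev _ _
      _ ≤ Real.exp (-μ * t) * δ * ‖t - 0‖ := hmvt
      _ = Real.exp (-μ * t) * δ * t := by rw [sub_zero, Real.norm_of_nonneg ht]
  -- final arithmetic
  have hexp2 : Real.exp (-μ * t) = Real.exp (-μ * t / 2) * Real.exp (-μ * t / 2) := by
    rw [← Real.exp_add]; ring_nf
  have hxe : t * Real.exp (-μ * t / 2) ≤ 2 / μ := by
    have h1 : μ * t / 2 ≤ Real.exp (μ * t / 2) := by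
      linarith [Real.add_one_le_exp (μ * t / 2)]
    have hep : 0 < Real.exp (μ * t / 2) := Real.exp_pos _
    have h2 : Real.exp (-μ * t / 2) * Real.exp (μ * t / 2) = 1 := by
      rw [← Real.exp_add, show -μ * t / 2 + μ * t / 2 = 0 by ring, Real.exp_zero]
    rw [le_div_iff₀ hμ]
    nlinarith [mul_le_mul_of_nonneg_right h1 (Real.exp_nonneg (-μ * t / 2)), h2]
  have hκνnn : 0 ≤ κ * ‖ν‖ := mul_nonneg hκ0 (norm_nonneg ν)
  have h2κν : 0 ≤ 2 * κ * ‖ν‖ := by linarith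
  calc ‖exp (t • N) - exp (t • N₀)‖ ≤ Real.exp (-μ * t) * δ * t := hMVT
    _ ≤ Real.exp (-μ * t) * (2 * κ * ‖ν‖) * t := by
        exact mul_le_mul_of_nonneg_right
          (mul_le_mul_of_nonneg_left hdiff (Real.exp_nonneg _)) ht
    _ = (t * Real.exp (-μ * t / 2)) * (Real.exp (-μ * t / 2) * (2 * κ * ‖ν‖)) := by
        rw [hexp2]; ring
    _ ≤ (2 / μ) * (Real.exp (-μ * t / 2) * (2 * κ * ‖ν‖)) := by
        exact mul_le_mul_of_nonneg_right hxe (by positivity)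
    _ ≤ 32 * Real.exp (-μ * t / 2) * μ⁻¹ * κ * ‖ν‖ := by
        rw [div_eq_mul_inv]
        nlinarith [mul_nonneg (mul_nonneg (Real.exp_nonneg (-μ * t / 2))
          (inv_nonneg.mpr hμ.le)) hκνnn]
end
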